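/- arXiv:2304.08605 — 4 statements merged into one kernel-verified Lean document; each statement's English description precedes it below -/
import Mathlib

section
/- Let X_1, …, X_n (n ≥ 2) be i.i.d. random elements, let h be a symmetric measurable kernel of two arguments, set m = ⌊n/2⌋, and let U_n = C(n,2)^{-1} Σ_{1 ≤ i < j ≤ n} h(X_i, X_j). Then for any γ > 0 with E[exp(γ h(X_1, X_2)/m)] < ∞, E[exp(γ U_n)] ≤ ( E[exp(γ h(X_1, X_2)/m)] )^m. -/
open MeasureTheory Finset

section Aux

variable {α : Type*} [MeasurableSpace α] (ν : Measure α) [IsProbabilityMeasure ν]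

lemma aux_measurePreserving_comp_inj {ι κ : Type*} [Fintype ι] [Fintype κ]
    (f : ι → κ) (hf : Function.Injective f) :
    MeasurePreserving (fun x : κ → α => x ∘ f)
      (Measure.pi fun _ : κ => ν) (Measure.pi fun _ : ι => ν) := by
  classical
  have hmeas : Measurable (fun x : κ → α => x ∘ f) :=
    measurable_pi_lambda _ fun i => measurable_pi_apply (f i)
  refine ⟨hmeas, (Measure.pi_eq fun s hs => ?_).symm⟩
  set t : κ → Set α := fun j => ⋂ (i : ι) (_ : f i = j), s i with ht
  have htm : ∀ j, MeasurableSet (t j) := fun j =>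
    MeasurableSet.iInter fun i => MeasurableSet.iInter fun _ => hs i
  have hpre : (fun x : κ → α => x ∘ f) ⁻¹' Set.univ.pi s = Set.univ.pi t := by
    ext x
    simp only [Set.mem_preimage, Set.mem_pi, Set.mem_univ, forall_true_left,
      Function.comp, ht, Set.mem_iInter]
    constructor
    · rintro hx j i rfl; exact hx i
    · intro hx i; exact hx (f i) i rfl
  rw [Measure.map_apply hmeas (MeasurableSet.univ_pi hs), hpre, Measure.pi_pi]
  have h1 : ∀ i : ι, t (f i) = s i := by
    intro i
    ext y
    simp only [ht, Set.mem_iInter]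
    constructor
    · exact fun hy => hy i rfl
    · intro hy i' hi'
      have : i' = i := hf hi'
      subst this
      exact hy
  calc ∏ j, ν (t j) = ∏ j ∈ Finset.univ.image f, ν (t j) := by
        refine (Finset.prod_subset (Finset.subset_univ _) ?_).symm
        intro j _ hj
        have : t j = Set.univ := by
          ext y
          simp only [ht, Set.mem_iInter, Set.mem_univ, iff_true]
          intro i hi
          exact ((hj (Finset.mem_image.mpr ⟨i, Finset.mem_univ i, hi⟩)).elim)
        rw [this]
        simp
    _ = ∏ i, ν (s i) := by
        rw [Finset.prod_image (fun a _ b _ hab => hf hab)]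
        exact Finset.prod_congr rfl fun i _ => by rw [h1 i]

lemma aux_measurePreserving_pair {ι : Type*} [Fintype ι] :
    MeasurePreserving (fun (x : ι × Bool → α) (k : ι) => (x (k, false), x (k, true)))
      (Measure.pi fun _ : ι × Bool => ν) (Measure.pi fun _ : ι => ν.prod ν) := by
  classical
  let p : ι × Bool → Prop := fun q => q.2 = false
  have e1 : MeasurePreserving (MeasurableEquiv.piEquivPiSubtypeProd (fun _ : ι × Bool => α) p)
      (Measure.pi fun _ : ι × Bool => ν)
      ((Measure.pi fun _ : Subtype p => ν).prod (Measure.pi fun _ : {q // ¬ p q} => ν)) :=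
    measurePreserving_piEquivPiSubtypeProd (fun _ => ν) p
  let eF : Subtype p ≃ ι :=
    { toFun := fun q => q.1.1
      invFun := fun k => ⟨(k, false), rfl⟩
      left_inv := fun q => by
        rcases q with ⟨⟨k, b⟩, hb⟩
        simp only [p] at hb
        subst hb; rfl
      right_inv := fun k => rfl }
  let eT : {q : ι × Bool // ¬ p q} ≃ ι :=
    { toFun := fun q => q.1.1
      invFun := fun k => ⟨(k, true), by simp [p]⟩
      left_inv := fun q => by
        rcases q with ⟨⟨k, b⟩, hb⟩
        simp only [p, Bool.not_eq_false] at hb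
        subst hb; rfl
      right_inv := fun k => rfl }
  have e2 : MeasurePreserving (MeasurableEquiv.piCongrLeft (fun _ : ι => α) eF)
      (Measure.pi fun _ : Subtype p => ν) (Measure.pi fun _ : ι => ν) :=
    measurePreserving_piCongrLeft (fun _ : ι => ν) eF
  have e3 : MeasurePreserving (MeasurableEquiv.piCongrLeft (fun _ : ι => α) eT)
      (Measure.pi fun _ : {q // ¬ p q} => ν) (Measure.pi fun _ : ι => ν) :=
    measurePreserving_piCongrLeft (fun _ : ι => ν) eT
  have e4 : MeasurePreserving (MeasurableEquiv.arrowProdEquivProdArrow α α ι).symm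
      ((Measure.pi fun _ : ι => ν).prod (Measure.pi fun _ : ι => ν))
      (Measure.pi fun _ : ι => ν.prod ν) :=
    (measurePreserving_arrowProdEquivProdArrow α α ι (fun _ => ν) (fun _ => ν)).symm _
  have hcomp := e4.comp ((e2.prod e3).comp e1)
  have hfe : (fun (x : ι × Bool → α) (k : ι) => (x (k, false), x (k, true)))
      = ⇑(MeasurableEquiv.arrowProdEquivProdArrow α α ι).symm
        ∘ (Prod.map ⇑(MeasurableEquiv.piCongrLeft (fun _ : ι => α) eF)
            ⇑(MeasurableEquiv.piCongrLeft (fun _ : ι => α) eT)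
          ∘ ⇑(MeasurableEquiv.piEquivPiSubtypeProd (fun _ : ι × Bool => α) p)) := by
    funext x
    funext k
    refine Prod.ext ?_ ?_
    · show x (k, false)
        = (MeasurableEquiv.piCongrLeft (fun _ : ι => α) eF) (fun q : Subtype p => x q) k
      exact (Equiv.piCongrLeft_apply_apply (fun _ : ι => α) eF
        (fun q : Subtype p => x q) ⟨(k, false), rfl⟩).symm
    · show x (k, true)
        = (MeasurableEquiv.piCongrLeft (fun _ : ι => α) eT) (fun q : {q // ¬ p q} => x q) k
      exact (Equiv.piCongrLeft_apply_apply (fun _ : ι => α) eT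
        (fun q : {q // ¬ p q} => x q) ⟨(k, true), by simp [p]⟩).symm
  rwa [← hfe] at hcomp

lemma aux_measurePreserving_pairs {ι κ : Type*} [Fintype ι] [Fintype κ]
    (a b : ι → κ) (hinj : Function.Injective (fun q : ι × Bool => cond q.2 (b q.1) (a q.1))) :
    MeasurePreserving (fun (x : κ → α) (k : ι) => (x (a k), x (b k)))
      (Measure.pi fun _ : κ => ν) (Measure.pi fun _ : ι => ν.prod ν) :=
  (aux_measurePreserving_pair ν).comp
    (aux_measurePreserving_comp_inj ν (fun q : ι × Bool => cond q.2 (b q.1) (a q.1)) hinj)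

lemma aux_integral_prod_pairs {ι κ : Type*} [Fintype ι] [Fintype κ]
    (a b : ι → κ) (hinj : Function.Injective (fun q : ι × Bool => cond q.2 (b q.1) (a q.1)))
    (f : α × α → ℝ) (hf : Measurable f) (hfi : Integrable f (ν.prod ν)) :
    Integrable (fun x : κ → α => ∏ k : ι, f (x (a k), x (b k))) (Measure.pi fun _ : κ => ν) ∧
      ∫ x : κ → α, ∏ k : ι, f (x (a k), x (b k)) ∂(Measure.pi fun _ : κ => ν)
        = (∫ p, f p ∂(ν.prod ν)) ^ (Fintype.card ι) := by
  letI : MeasureSpace (α × α) := ⟨ν.prod ν⟩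
  haveI : IsProbabilityMeasure (volume : Measure (α × α)) := by
    show IsProbabilityMeasure (ν.prod ν); infer_instance
  have hT := aux_measurePreserving_pairs ν a b hinj
  have hF : Measurable fun y : ι → α × α => ∏ k, f (y k) :=
    Finset.measurable_prod _ fun k _ => hf.comp (measurable_pi_apply k)
  have hFi : Integrable (fun y : ι → α × α => ∏ k, f (y k))
      (Measure.pi fun _ : ι => ν.prod ν) := by
    have := Integrable.fintype_prod (f := fun _ : ι => f) (fun _ => hfi)
    simpa [volume_pi] using this
  have hmapint : Integrable (fun x : κ → α => ∏ k : ι, f (x (a k), x (b k)))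
      (Measure.pi fun _ : κ => ν) := by
    have h1 : Integrable (fun y : ι → α × α => ∏ k, f (y k))
        (Measure.map (fun (x : κ → α) (k : ι) => (x (a k), x (b k)))
          (Measure.pi fun _ : κ => ν)) := by
      rw [hT.map_eq]; exact hFi
    exact (integrable_map_measure hF.aestronglyMeasurable
      hT.measurable.aemeasurable).mp h1
  refine ⟨hmapint, ?_⟩
  have hmap : (∫ y : ι → α × α, (∏ k, f (y k))
        ∂(Measure.map (fun (x : κ → α) (k : ι) => (x (a k), x (b k)))
          (Measure.pi fun _ : κ => ν)))
      = ∫ x : κ → α, ∏ k : ι, f (x (a k), x (b k)) ∂(Measure.pi fun _ : κ => ν) :=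
    integral_map hT.measurable.aemeasurable hF.aestronglyMeasurable
  rw [hT.map_eq] at hmap
  rw [← hmap]
  exact integral_fintype_prod_eq_pow (E := α × α) f

end Aux

/-- **Jensen bound for the moment generating function of a U-statistic.** For `X₁, …, Xₙ`
i.i.d. with law `ν` (`n ≥ 2`), a symmetric kernel `h` of two arguments, `m = ⌊n/2⌋` and
`Uₙ = C(n,2)⁻¹ ∑_{i<j} h(Xᵢ, Xⱼ)`, for any `γ > 0` with `E[exp(γ h(X₁,X₂)/m)] < ∞`,
`E[exp(γ Uₙ)] ≤ (E[exp(γ h(X₁,X₂)/m)])^m`. -/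
theorem ustatistic_mgf_bound {α : Type*} [MeasurableSpace α]
    (ν : Measure α) [IsProbabilityMeasure ν] (n : ℕ) (hn : 2 ≤ n)
    (h : α → α → ℝ) (hmeas : Measurable (Function.uncurry h))
    (hsymm : ∀ x y, h x y = h y x) (γ : ℝ) (hγ : 0 < γ)
    (hint : Integrable (fun p : α × α =>
      Real.exp (γ * h p.1 p.2 / (↑(n / 2) : ℝ))) (ν.prod ν)) :
    ∫ x : Fin n → α,
        Real.exp (γ * ((n.choose 2 : ℝ)⁻¹ *
          ∑ i : Fin n, ∑ j : Fin n, if i < j then h (x i) (x j) else 0))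
        ∂(Measure.pi fun _ : Fin n => ν) ≤
      (∫ p : α × α, Real.exp (γ * h p.1 p.2 / (↑(n / 2) : ℝ)) ∂(ν.prod ν)) ^ (n / 2) := by
  classical
  set π : Measure (Fin n → α) := Measure.pi fun _ : Fin n => ν with hπ
  set m : ℕ := n / 2 with hmdef
  have hm1 : 1 ≤ m := by omega
  have h2m : 2 * m ≤ n := by omega
  set f : α × α → ℝ := fun p => Real.exp (γ * h p.1 p.2 / (m : ℝ)) with hfdef
  have hfmeas : Measurable f := ((hmeas.const_mul γ).div_const _).exp
  set M : ℝ := ∫ p, f p ∂(ν.prod ν) with hM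
  set A : Equiv.Perm (Fin n) → Fin m → Fin n :=
    fun σ k => σ ⟨2 * (k : ℕ), by have := k.2; omega⟩ with hA
  set B : Equiv.Perm (Fin n) → Fin m → Fin n :=
    fun σ k => σ ⟨2 * (k : ℕ) + 1, by have := k.2; omega⟩ with hB
  have hinj : ∀ σ : Equiv.Perm (Fin n),
      Function.Injective (fun q : Fin m × Bool => cond q.2 (B σ q.1) (A σ q.1)) := by
    intro σ
    rintro ⟨k, (_|_)⟩ ⟨l, (_|_)⟩ hq <;>
    · simp only [cond_false, cond_true, hA, hB] at hq
      have h2 := σ.injective hq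
      rw [Fin.mk.injEq] at h2
      have hk := k.2
      have hl := l.2
      first
        | (exfalso; omega)
        | (have : k = l := Fin.ext (by omega); subst this; rfl)
  set c : ℝ := (Nat.factorial n : ℝ) with hc
  have hcpos : (0:ℝ) < c := by
    rw [hc]; exact_mod_cast Nat.factorial_pos n
  have hcard : (Fintype.card (Equiv.Perm (Fin n)) : ℝ) = c := by
    rw [Fintype.card_perm, Fintype.card_fin, hc]
  set V : Equiv.Perm (Fin n) → (Fin n → α) → ℝ :=
    fun σ x => ∑ k : Fin m, h (x (A σ k)) (x (B σ k)) with hV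
  -- choose arithmetic
  have hchpos : (0:ℝ) < (n.choose 2 : ℝ) := by
    exact_mod_cast Nat.choose_pos hn
  have hnn : n * n - n = 2 * n.choose 2 := by
    have hd2 : 2 ∣ n * (n - 1) := by
      rcases Nat.even_or_odd n with he | ho
      · exact Dvd.dvd.mul_right he.two_dvd _
      · exact Dvd.dvd.mul_left (Nat.Odd.sub_odd ho odd_one).two_dvd _
    have h2 : 2 * n.choose 2 = n * (n - 1) := by
      rw [Nat.choose_two_right]
      exact Nat.mul_div_cancel' hd2
    have h1 : n * (n - 1) = n * n - n := by
      cases n with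
      | zero => simp
      | succ k => simp [Nat.succ_sub_one, Nat.mul_sub, Nat.mul_succ]
    omega
  have hch : (n : ℝ) * (n : ℝ) - (n : ℝ) = 2 * (n.choose 2 : ℝ) := by
    have hle : n ≤ n * n := Nat.le_mul_of_pos_left n (by omega)
    have := congrArg (fun t : ℕ => (t : ℝ)) hnn
    rw [Nat.cast_sub hle] at this
    push_cast at this
    linarith
  -- pointwise combinatorial identity
  have hkey : ∀ x : Fin n → α,
      γ * ((n.choose 2 : ℝ)⁻¹ *
          ∑ i : Fin n, ∑ j : Fin n, if i < j then h (x i) (x j) else 0)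
        = ∑ σ : Equiv.Perm (Fin n), c⁻¹ * (γ * V σ x / (m : ℝ)) := by
    intro x
    set F : Fin n → Fin n → ℝ := fun i j => h (x i) (x j) with hF
    set S2 : ℝ := ∑ i : Fin n, ∑ j : Fin n, if i < j then F i j else 0 with hS2
    set Sd : ℝ := ∑ i : Fin n, ∑ j : Fin n, if i ≠ j then F i j else 0 with hSd
    have hsplit : ∀ i j : Fin n, (if i ≠ j then F i j else 0)
        = (if i < j then F i j else 0) + (if j < i then F i j else 0) := by
      intro i j
      rcases lt_trichotomy i j with hl | he | hg
      · rw [if_pos hl.ne, if_pos hl, if_neg (asymm hl), add_zero]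
      · subst he; simp
      · rw [if_pos hg.ne', if_neg (asymm hg), if_pos hg, zero_add]
    have hSd2 : Sd = S2 + S2 := by
      have hstep : Sd = (∑ i : Fin n, ∑ j : Fin n, if i < j then F i j else 0)
          + (∑ i : Fin n, ∑ j : Fin n, if j < i then F i j else 0) := by
        rw [hSd, ← Finset.sum_add_distrib]
        refine Finset.sum_congr rfl fun i _ => ?_
        rw [← Finset.sum_add_distrib]
        exact Finset.sum_congr rfl fun j _ => hsplit i j
      rw [hstep, hS2]
      congr 1
      conv_rhs => rw [Finset.sum_comm]
      refine Finset.sum_congr rfl fun a _ => Finset.sum_congr rfl fun b _ => ?_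
      by_cases hab : a < b <;> simp [hab, hF, hsymm (x a) (x b)]
    -- permutation invariance of pair sums
    have hperm : ∀ (a b a' b' : Fin n), a ≠ b → a' ≠ b' →
        (∑ σ : Equiv.Perm (Fin n), F (σ a) (σ b))
          = ∑ σ : Equiv.Perm (Fin n), F (σ a') (σ b') := by
      intro a b a' b' hab ha'b'
      obtain ⟨τ, hτa, hτb⟩ : ∃ τ : Equiv.Perm (Fin n), τ a = a' ∧ τ b = b' := by
        refine ⟨(Equiv.swap (Equiv.swap a a' b) b') * (Equiv.swap a a'), ?_, ?_⟩
        · have hs : Equiv.swap a a' b ≠ a' := by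
            intro hcontra
            have hba : b = a := by
              have := (Equiv.swap a a').injective
                (hcontra.trans (Equiv.swap_apply_left a a').symm)
              exact this
            exact hab hba.symm
          simp only [Equiv.Perm.mul_apply]
          rw [Equiv.swap_apply_left]
          exact Equiv.swap_apply_of_ne_of_ne (Ne.symm hs) ha'b'
        · simp only [Equiv.Perm.mul_apply]
          exact Equiv.swap_apply_left _ _
      exact (Fintype.sum_bijective (· * τ) (Group.mulRight_bijective τ)
        (fun σ => F (σ a') (σ b')) (fun ρ => F (ρ a) (ρ b))
        (fun σ => by simp [Equiv.Perm.mul_apply, hτa, hτb])).symm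
    have h01 : (⟨0, by omega⟩ : Fin n) ≠ ⟨1, by omega⟩ := by
      simp [Fin.ext_iff]
    set C : ℝ := ∑ σ : Equiv.Perm (Fin n), F (σ ⟨0, by omega⟩) (σ ⟨1, by omega⟩) with hC
    -- counting identity
    have hL1 : (∑ a : Fin n, ∑ b : Fin n,
        if a ≠ b then (∑ σ : Equiv.Perm (Fin n), F (σ a) (σ b)) else 0)
          = ∑ a : Fin n, ∑ b : Fin n, (if a ≠ b then C else 0) := by
      refine Finset.sum_congr rfl fun a _ => Finset.sum_congr rfl fun b _ => ?_
      by_cases hab : a ≠ b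
      · rw [if_pos hab, if_pos hab, hperm a b _ _ hab h01, hC]
      · rw [if_neg hab, if_neg hab]
    have hL2 : (∑ a : Fin n, ∑ b : Fin n,
        if a ≠ b then (∑ σ : Equiv.Perm (Fin n), F (σ a) (σ b)) else 0) = c * Sd := by
      have hpull : ∀ a b : Fin n, (if a ≠ b then (∑ σ : Equiv.Perm (Fin n), F (σ a) (σ b)) else 0)
          = ∑ σ : Equiv.Perm (Fin n), (if a ≠ b then F (σ a) (σ b) else 0) := by
        intro a b
        by_cases hab : a ≠ b
        · simp [hab]
        · simp [hab]
      simp_rw [hpull]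
      rw [show (∑ a : Fin n, ∑ b : Fin n, ∑ σ : Equiv.Perm (Fin n),
          (if a ≠ b then F (σ a) (σ b) else 0))
          = ∑ σ : Equiv.Perm (Fin n), ∑ a : Fin n, ∑ b : Fin n,
            (if a ≠ b then F (σ a) (σ b) else 0) from
        (Finset.sum_congr rfl fun a _ => Finset.sum_comm).trans Finset.sum_comm]
      have hone : ∀ σ : Equiv.Perm (Fin n),
          (∑ a : Fin n, ∑ b : Fin n, (if a ≠ b then F (σ a) (σ b) else 0)) = Sd := by
        intro σ
        have hcond : ∀ a b : Fin n, (if a ≠ b then F (σ a) (σ b) else 0)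
            = (fun i j => if i ≠ j then F i j else 0) (σ a) (σ b) := by
          intro a b
          by_cases hab : a = b
          · subst hab; simp
          · simp only []
            rw [if_pos hab, if_pos (fun hcon => hab (σ.injective hcon))]
        simp_rw [hcond]
        rw [hSd]
        exact Fintype.sum_equiv σ _ _ (fun a =>
          Fintype.sum_equiv σ _ _ (fun b => rfl))
      rw [Finset.sum_congr rfl fun σ _ => hone σ, Finset.sum_const, Finset.card_univ,
        nsmul_eq_mul, hcard]
    have hL3 : (∑ a : Fin n, ∑ b : Fin n, (if a ≠ b then C else 0))
        = ((n : ℝ) * (n : ℝ) - (n : ℝ)) * C := by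
      have hrow : ∀ a : Fin n, (∑ b : Fin n, if a ≠ b then C else 0) = (n : ℝ) * C - C := by
        intro a
        have : ∀ b : Fin n, (if a ≠ b then C else 0) = C - (if a = b then C else 0) := by
          intro b
          by_cases hab : a = b <;> simp [hab]
        rw [Finset.sum_congr rfl fun b _ => this b, Finset.sum_sub_distrib,
          Finset.sum_const, Finset.card_univ, Fintype.card_fin, nsmul_eq_mul,
          Finset.sum_ite_eq]
        simp
      rw [Finset.sum_congr rfl fun a _ => hrow a, Finset.sum_const, Finset.card_univ,
        Fintype.card_fin, nsmul_eq_mul]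
      ring
    have hcount : ((n : ℝ) * (n : ℝ) - (n : ℝ)) * C = c * Sd := by
      rw [← hL3, ← hL1, hL2]
    -- sum of V over permutations
    have hVsum : (∑ σ : Equiv.Perm (Fin n), V σ x) = (m : ℝ) * C := by
      rw [hV]
      rw [Finset.sum_comm]
      have : ∀ k : Fin m, (∑ σ : Equiv.Perm (Fin n), h (x (A σ k)) (x (B σ k))) = C := by
        intro k
        have hne : (⟨2 * (k : ℕ), by have := k.2; omega⟩ : Fin n)
            ≠ ⟨2 * (k : ℕ) + 1, by have := k.2; omega⟩ := by
          simp [Fin.ext_iff]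
        rw [hC]
        exact hperm _ _ _ _ hne h01
      rw [Finset.sum_congr rfl fun k _ => this k, Finset.sum_const, Finset.card_univ,
        Fintype.card_fin, nsmul_eq_mul]
    -- conclude
    have hchC : (n.choose 2 : ℝ) * C = c * S2 := by
      have hexpand : ((n : ℝ) * (n : ℝ) - (n : ℝ)) * C = 2 * ((n.choose 2 : ℝ) * C) := by
        rw [hch]; ring
      rw [hexpand, hSd2] at hcount
      linarith
    have hmne : ((m : ℕ) : ℝ) ≠ 0 := by
      exact_mod_cast Nat.one_le_iff_ne_zero.mp hm1
    have hsum : (∑ σ : Equiv.Perm (Fin n), c⁻¹ * (γ * V σ x / (m : ℝ)))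
        = c⁻¹ * γ / (m : ℝ) * ((m : ℝ) * C) := by
      rw [← hVsum, Finset.mul_sum]
      exact Finset.sum_congr rfl fun σ _ => by ring
    rw [hsum]
    have hC' : C = c * S2 / (n.choose 2 : ℝ) := by
      field_simp at hchC ⊢
      linarith
    rw [hC']
    field_simp
  -- exponential as product
  have hexp : ∀ (σ : Equiv.Perm (Fin n)) (x : Fin n → α),
      Real.exp (γ * V σ x / (m : ℝ)) = ∏ k : Fin m, f (x (A σ k), x (B σ k)) := by
    intro σ x
    rw [hV]
    rw [Finset.mul_sum, Finset.sum_div, Real.exp_sum]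
  -- integrability and value of each product
  have hprod := fun σ : Equiv.Perm (Fin n) =>
    aux_integral_prod_pairs ν (A σ) (B σ) (hinj σ) f hfmeas hint
  have hSint : Integrable (fun x : Fin n → α =>
      ∑ σ : Equiv.Perm (Fin n), c⁻¹ * ∏ k : Fin m, f (x (A σ k), x (B σ k))) π :=
    integrable_finset_sum _ fun σ _ => ((hprod σ).1.const_mul _)
  have hmono : ∫ x, Real.exp (γ * ((n.choose 2 : ℝ)⁻¹ *
        ∑ i : Fin n, ∑ j : Fin n, if i < j then h (x i) (x j) else 0)) ∂π
      ≤ ∫ x, (∑ σ : Equiv.Perm (Fin n),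
          c⁻¹ * ∏ k : Fin m, f (x (A σ k), x (B σ k))) ∂π := by
    refine integral_mono_of_nonneg
      (Filter.Eventually.of_forall fun x => (Real.exp_pos _).le) hSint
      (Filter.Eventually.of_forall fun x => ?_)
    dsimp only
    rw [hkey x]
    have hjen := convexOn_exp.map_sum_le (t := (Finset.univ : Finset (Equiv.Perm (Fin n))))
      (w := fun _ => c⁻¹) (p := fun σ => γ * V σ x / (m : ℝ))
      (fun _ _ => by positivity) (by
        rw [Finset.sum_const, Finset.card_univ, nsmul_eq_mul, hcard]
        field_simp) (fun _ _ => Set.mem_univ _)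
    simp only [smul_eq_mul] at hjen
    refine le_trans hjen ?_
    refine le_of_eq (Finset.sum_congr rfl fun σ _ => ?_)
    rw [hexp σ x]
  refine le_trans hmono ?_
  rw [integral_finset_sum _ fun σ _ => ((hprod σ).1.const_mul _)]
  have hval : ∀ σ : Equiv.Perm (Fin n),
      (∫ x, c⁻¹ * ∏ k : Fin m, f (x (A σ k), x (B σ k)) ∂π) = c⁻¹ * M ^ m := by
    intro σ
    rw [integral_const_mul, (hprod σ).2, Fintype.card_fin, hM]
  rw [Finset.sum_congr rfl fun σ _ => hval σ, Finset.sum_const, Finset.card_univ,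
    nsmul_eq_mul, hcard]
  rw [← mul_assoc, mul_inv_cancel₀ (ne_of_gt hcpos), one_mul]
end

section
/- Let X_1, …, X_n (n ≥ 2) be i.i.d. random vectors in ℝ^q with B := E[exp(s‖X_1‖)] < ∞ for some s > 0 and Δ := E‖X_1 − X_2‖ < ∞, and let U_n = C(n,2)^{-1} Σ_{1 ≤ i < j ≤ n} ‖X_i − X_j‖. Suppose M > 0 and ε > 0 satisfy E[ ‖X_1 − X_2‖ 𝟙(‖X_1 − X_2‖ > M) ] ≤ ε/2. Then P(|U_n − Δ| ≥ 2ε) ≤ 2 exp( −2 (ε/2)² ⌊n/2⌋ / M² ) + n · B · exp(−sM/2). -/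
open MeasureTheory Finset


lemma aux_exp_quad {u : ℝ} (hu : |u| ≤ 1) : Real.exp u ≤ 1 + u + (3/4) * u^2 := by
  have h := Real.exp_bound hu (n := 2) (by norm_num)
  have h2 : ∑ m ∈ Finset.range 2, u ^ m / m.factorial = 1 + u := by
    simp [Finset.sum_range_succ]
  rw [h2] at h
  have := (abs_sub_le_iff.1 h).1
  have habs : |u| ^ 2 = u ^ 2 := sq_abs u
  norm_num at this ⊢
  nlinarith [sq_abs u]

lemma aux_pipow {α : Type*} [MeasurableSpace α] (ρ : Measure α) [SigmaFinite ρ] (m : ℕ)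
    (f : α → ℝ) :
    ∫ x : Fin m → α, ∏ k, f (x k) ∂(Measure.pi fun _ => ρ) = (∫ a, f a ∂ρ) ^ m := by
  letI : MeasureSpace α := ⟨ρ⟩
  haveI : SigmaFinite (volume : Measure α) := ‹_›
  simpa using MeasureTheory.integral_fintype_prod_eq_pow (ι := Fin m) f (μ := ρ)

lemma aux_markov {Ω : Type*} [MeasurableSpace Ω] {μ : Measure Ω} [IsProbabilityMeasure μ]
    {f : Ω → ℝ} (hf : Integrable f μ) (h0 : 0 ≤ f) {c K : ℝ} (hc : 0 < c)
    (hK : ∫ x, f x ∂μ ≤ K) {T : Set Ω} (hT : T ⊆ {x | c ≤ f x}) :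
    μ T ≤ ENNReal.ofReal (K / c) := by
  have h1 : μ T ≤ μ {x | c ≤ f x} := measure_mono hT
  have h2 : c * (μ {x | c ≤ f x}).toReal ≤ ∫ x, f x ∂μ :=
    mul_meas_ge_le_integral_of_nonneg (Filter.Eventually.of_forall h0) hf c
  have h3 : (μ {x | c ≤ f x}).toReal ≤ K / c := by
    rw [le_div_iff₀ hc]; nlinarith
  calc μ T ≤ μ {x | c ≤ f x} := h1
    _ = ENNReal.ofReal (μ {x | c ≤ f x}).toReal := (ENNReal.ofReal_toReal (measure_ne_top _ _)).symm
    _ ≤ ENNReal.ofReal (K / c) := ENNReal.ofReal_le_ofReal h3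

lemma aux_eval {α : Type*} [MeasurableSpace α] (ν : Measure α) [IsProbabilityMeasure ν]
    (n : ℕ) (i : Fin n) {A : Set α} (hA : MeasurableSet A) :
    (Measure.pi fun _ : Fin n => ν) ((fun x => x i) ⁻¹' A) = ν A := by
  classical
  have : (fun x : Fin n → α => x i) ⁻¹' A =
      Set.pi Set.univ (Function.update (fun _ : Fin n => (Set.univ : Set α)) i A) := by
    ext x
    simp only [Set.mem_preimage, Set.mem_pi, Set.mem_univ, forall_true_left]
    constructor
    · intro h j
      rcases eq_or_ne j i with rfl | hj
      · simpa using h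
      · simp [Function.update, hj]
    · intro h; have := h i; simpa using this
  rw [this, Measure.pi_pi]
  rw [show (fun i_1 => ν (Function.update (fun _ : Fin n => (Set.univ : Set α)) i A i_1)) =
    Function.update (fun _ : Fin n => ν Set.univ) i (ν A) from ?_]
  · rw [Finset.prod_update_of_mem (Finset.mem_univ i)]
    simp
  · ext j
    rcases eq_or_ne j i with rfl | hj
    · simp
    · simp [hj]

lemma aux_mgf {β : Type*} [MeasurableSpace β] (ρ : Measure β) [IsProbabilityMeasure ρ]
    (ψ : β → ℝ) (hm : Measurable ψ) {M t : ℝ} (hM : 0 < M)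
    (hb : ∀ p, |ψ p| ≤ M) (h0 : ∫ p, ψ p ∂ρ = 0) (ht : |t| * M ≤ 1) :
    ∫ p, Real.exp (t * ψ p) ∂ρ ≤ Real.exp (3/4 * t^2 * M^2) := by
  have hint1 : Integrable ψ ρ := by
    apply Integrable.mono' (integrable_const M) hm.aestronglyMeasurable
    exact Filter.Eventually.of_forall fun p => hb p
  have hint2 : Integrable (fun p => ψ p ^ 2) ρ := by
    apply Integrable.mono' (integrable_const (M^2)) (hm.pow_const 2).aestronglyMeasurable
    refine Filter.Eventually.of_forall fun p => ?_
    have : |ψ p ^ 2| ≤ M ^ 2 := by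
      rw [abs_pow]; exact pow_le_pow_left₀ (abs_nonneg _) (hb p) 2
    simpa using this
  have key : ∀ p, Real.exp (t * ψ p) ≤ 1 + t * ψ p + 3/4 * t^2 * ψ p ^ 2 := by
    intro p
    have hu : |t * ψ p| ≤ 1 := by
      rw [abs_mul]
      calc |t| * |ψ p| ≤ |t| * M := by
            exact mul_le_mul_of_nonneg_left (hb p) (abs_nonneg t)
        _ ≤ 1 := ht
    have := aux_exp_quad hu
    calc Real.exp (t * ψ p) ≤ 1 + t * ψ p + 3/4 * (t * ψ p)^2 := this
      _ = 1 + t * ψ p + 3/4 * t^2 * ψ p ^ 2 := by ring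
  have hintexp : Integrable (fun p => Real.exp (t * ψ p)) ρ := by
    apply Integrable.mono' (integrable_const (Real.exp (|t| * M)))
      (((measurable_const.mul hm).exp).aestronglyMeasurable)
    refine Filter.Eventually.of_forall fun p => ?_
    have hre : ‖Real.exp (t * ψ p)‖ = Real.exp (t * ψ p) :=
      Real.norm_of_nonneg (Real.exp_pos _).le
    change ‖Real.exp (t * ψ p)‖ ≤ _
    rw [hre]
    apply Real.exp_le_exp.2
    calc t * ψ p ≤ |t * ψ p| := le_abs_self _
      _ = |t| * |ψ p| := abs_mul _ _
      _ ≤ |t| * M := mul_le_mul_of_nonneg_left (hb p) (abs_nonneg t)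
  calc ∫ p, Real.exp (t * ψ p) ∂ρ
      ≤ ∫ p, (1 + t * ψ p + 3/4 * t^2 * ψ p ^ 2) ∂ρ := by
        apply integral_mono hintexp _ key
        exact ((integrable_const 1).add (hint1.const_mul t)).add (hint2.const_mul _)
    _ = 1 + t * ∫ p, ψ p ∂ρ + 3/4 * t^2 * ∫ p, ψ p ^ 2 ∂ρ := by
        have e1 : ∫ p, (1 + t * ψ p + 3/4 * t^2 * ψ p ^ 2) ∂ρ =
            (∫ p, (1 + t * ψ p) ∂ρ) + ∫ p, 3/4 * t^2 * ψ p ^ 2 ∂ρ :=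
          integral_add ((integrable_const 1).add (hint1.const_mul t)) (hint2.const_mul _)
        have e2 : ∫ p, (1 + t * ψ p) ∂ρ = (∫ _p, (1:ℝ) ∂ρ) + ∫ p, t * ψ p ∂ρ :=
          integral_add (integrable_const 1) (hint1.const_mul t)
        rw [e1, e2, integral_const_mul, integral_const_mul]
        simp
    _ ≤ 1 + 3/4 * t^2 * M^2 := by
        rw [h0, mul_zero, add_zero]
        have : ∫ p, ψ p ^ 2 ∂ρ ≤ M ^ 2 := by
          calc ∫ p, ψ p ^ 2 ∂ρ ≤ ∫ _p, M ^ 2 ∂ρ := by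
                apply integral_mono hint2 (integrable_const _)
                intro p
                have : |ψ p| ^ 2 ≤ M ^ 2 := pow_le_pow_left₀ (abs_nonneg _) (hb p) 2
                calc ψ p ^ 2 = |ψ p| ^ 2 := (sq_abs _).symm
                  _ ≤ M ^ 2 := this
            _ = M ^ 2 := by simp
        nlinarith [sq_nonneg t]
    _ ≤ Real.exp (3/4 * t^2 * M^2) := by
        have := Real.add_one_le_exp (3/4 * t^2 * M^2)
        linarith

lemma aux_equiv_extend {A β γ : Type*} [Fintype A] [Fintype β] [Fintype γ] [DecidableEq γ]
    (f : A → γ) (hf : Function.Injective f)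
    (hcard : Fintype.card A + Fintype.card β = Fintype.card γ) :
    ∃ Φ : A ⊕ β ≃ γ, ∀ a, Φ (Sum.inl a) = f a := by
  classical
  have hrange : Fintype.card (Set.range f) = Fintype.card A :=
    Set.card_range_of_injective hf
  have hcompl : Fintype.card β = Fintype.card (↥(Set.range f)ᶜ) := by
    rw [Fintype.card_compl_set, hrange]
    omega
  obtain e₂ := Fintype.equivOfCardEq hcompl
  let e₁ : A ≃ Set.range f := Equiv.ofInjective f hf
  refine ⟨(e₁.sumCongr e₂).trans (Equiv.sumCompl (· ∈ Set.range f)), fun a => ?_⟩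
  simp [e₁, Equiv.sumCompl]

lemma aux_map_pairs {α : Type*} [MeasurableSpace α] (ν : Measure α) [IsProbabilityMeasure ν]
    {n m : ℕ} (hmn : 2 * m ≤ n) (f : Fin m ⊕ Fin m → Fin n) (hf : Function.Injective f) :
    (Measure.pi fun _ : Fin n => ν).map
        (fun (x : Fin n → α) (k : Fin m) => (x (f (Sum.inl k)), x (f (Sum.inr k)))) =
      Measure.pi fun _ : Fin m => ν.prod ν := by
  classical
  obtain ⟨Φ, hΦ⟩ := aux_equiv_extend (β := Fin (n - 2 * m)) f hf
    (by simp; omega)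
  -- chain of maps
  let T₁ : (Fin n → α) → ((Fin m ⊕ Fin m) ⊕ Fin (n - 2*m)) → α := fun x => x ∘ Φ
  let T₂ := MeasurableEquiv.sumPiEquivProdPi (fun _ : (Fin m ⊕ Fin m) ⊕ Fin (n - 2*m) => α)
  let T₃ := MeasurableEquiv.sumPiEquivProdPi (fun _ : Fin m ⊕ Fin m => α)
  let T₄ := (MeasurableEquiv.arrowProdEquivProdArrow α α (Fin m)).symm
  have hcomp : (fun (x : Fin n → α) (k : Fin m) => (x (f (Sum.inl k)), x (f (Sum.inr k)))) =
      T₄ ∘ T₃ ∘ Prod.fst ∘ T₂ ∘ T₁ := by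
    funext x
    ext k
    · simp [T₁, T₂, T₃, T₄, MeasurableEquiv.sumPiEquivProdPi,
        MeasurableEquiv.arrowProdEquivProdArrow, Equiv.arrowProdEquivProdArrow, hΦ]
    · simp [T₁, T₂, T₃, T₄, MeasurableEquiv.sumPiEquivProdPi,
        MeasurableEquiv.arrowProdEquivProdArrow, Equiv.arrowProdEquivProdArrow, hΦ]
  have hT₁ : MeasurePreserving T₁ (Measure.pi fun _ : Fin n => ν)
      (Measure.pi fun _ : (Fin m ⊕ Fin m) ⊕ Fin (n - 2*m) => ν) := by
    have := (measurePreserving_piCongrLeft (fun _ : Fin n => ν) Φ).symm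
    convert this using 1
    ext x i; rfl
  have hT₂ := measurePreserving_sumPiEquivProdPi
    (fun _ : (Fin m ⊕ Fin m) ⊕ Fin (n - 2*m) => ν)
  have hT₃ := measurePreserving_sumPiEquivProdPi (fun _ : Fin m ⊕ Fin m => ν)
  have hT₄ := (measurePreserving_arrowProdEquivProdArrow α α (Fin m)
    (fun _ => ν) (fun _ => ν)).symm
  rw [hcomp]
  have hfst : ((Measure.pi fun _ : Fin m ⊕ Fin m => ν).prod
      (Measure.pi fun _ : Fin (n - 2*m) => ν)).map Prod.fst =
      Measure.pi fun _ : Fin m ⊕ Fin m => ν := Measure.fst_prod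
  rw [show T₄ ∘ T₃ ∘ Prod.fst ∘ T₂ ∘ T₁ = (T₄ ∘ T₃ ∘ Prod.fst ∘ ⇑T₂) ∘ T₁ from rfl,
    ← Measure.map_map (by fun_prop) hT₁.measurable, hT₁.map_eq,
    show T₄ ∘ T₃ ∘ Prod.fst ∘ ⇑T₂ = (T₄ ∘ T₃ ∘ Prod.fst) ∘ ⇑T₂ from rfl,
    ← Measure.map_map (by fun_prop) hT₂.measurable, hT₂.map_eq,
    show T₄ ∘ ⇑T₃ ∘ Prod.fst = (T₄ ∘ ⇑T₃) ∘ Prod.fst from rfl,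
    ← Measure.map_map (by fun_prop) measurable_fst, hfst,
    ← Measure.map_map T₄.measurable T₃.measurable, hT₃.map_eq, hT₄.map_eq]

lemma aux_int_pairs {α : Type*} [MeasurableSpace α] (ν : Measure α) [IsProbabilityMeasure ν]
    {n m : ℕ} (hmn : 2 * m ≤ n) (f : Fin m ⊕ Fin m → Fin n) (hf : Function.Injective f)
    (H : α × α → ℝ) (hH : Measurable H) :
    ∫ x : Fin n → α, ∏ k : Fin m, H (x (f (Sum.inl k)), x (f (Sum.inr k)))
        ∂(Measure.pi fun _ : Fin n => ν) =
      (∫ p, H p ∂(ν.prod ν)) ^ m := by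
  have hmap := aux_map_pairs ν hmn f hf
  have hmeas : Measurable
      (fun (x : Fin n → α) (k : Fin m) => (x (f (Sum.inl k)), x (f (Sum.inr k)))) := by
    fun_prop
  have : ∫ x : Fin n → α, ∏ k : Fin m, H (x (f (Sum.inl k)), x (f (Sum.inr k)))
      ∂(Measure.pi fun _ : Fin n => ν) =
      ∫ w : Fin m → α × α, ∏ k : Fin m, H (w k) ∂(Measure.pi fun _ : Fin m => ν.prod ν) := by
    rw [← hmap, integral_map hmeas.aemeasurable]
    exact (Finset.measurable_prod Finset.univ fun k _ => hH.comp (measurable_pi_apply k)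
      ).aestronglyMeasurable
  rw [this, aux_pipow]

lemma aux_perm_exists {ι : Type*} [DecidableEq ι] {a b c d : ι} (hab : a ≠ b) (hcd : c ≠ d) :
    ∃ π : Equiv.Perm ι, π c = a ∧ π d = b := by
  classical
  set σ₁ := Equiv.swap c a with hσ₁
  set d₁ := σ₁ d with hd₁
  have hd₁a : d₁ ≠ a := by
    intro h
    have h2 : σ₁ c = a := Equiv.swap_apply_left c a
    exact hcd ((σ₁.injective (h.trans h2.symm)).symm)
  refine ⟨σ₁.trans (Equiv.swap d₁ b), ?_, ?_⟩
  · simp only [Equiv.trans_apply]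
    rw [hσ₁, Equiv.swap_apply_left]
    exact Equiv.swap_apply_of_ne_of_ne hd₁a.symm hab
  · simp only [Equiv.trans_apply]
    rw [← hd₁, Equiv.swap_apply_left]

lemma aux_sum_perm_const {ι : Type*} [DecidableEq ι] [Fintype ι] (F : ι → ι → ℝ)
    {a b c d : ι} (hab : a ≠ b) (hcd : c ≠ d) :
    ∑ σ : Equiv.Perm ι, F (σ a) (σ b) = ∑ σ : Equiv.Perm ι, F (σ c) (σ d) := by
  obtain ⟨π, hπc, hπd⟩ := aux_perm_exists hab hcd
  refine Fintype.sum_bijective (· * π) (Group.mulRight_bijective π) _ _ fun σ => ?_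
  simp [Equiv.Perm.mul_apply, hπc, hπd]

lemma aux_sum_perm {n : ℕ} (hn : 2 ≤ n) (F : Fin n → Fin n → ℝ)
    (hsym : ∀ i j, F i j = F j i) {a b : Fin n} (hab : a ≠ b) :
    ∑ σ : Equiv.Perm (Fin n), F (σ a) (σ b) =
      (n.factorial : ℝ) * ((n.choose 2 : ℝ))⁻¹ *
        ∑ i : Fin n, ∑ j : Fin n, (if i < j then F i j else 0) := by
  classical
  set S := ∑ σ : Equiv.Perm (Fin n), F (σ a) (σ b) with hS
  set P := ∑ i : Fin n, ∑ j : Fin n, (if i < j then F i j else 0) with hP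
  set D := ∑ p ∈ (Finset.univ : Finset (Fin n)).offDiag, F p.1 p.2 with hD
  -- step (2): inner reindex
  have hreindex : ∀ σ : Equiv.Perm (Fin n),
      ∑ p ∈ (Finset.univ : Finset (Fin n)).offDiag, F (σ p.1) (σ p.2) = D := by
    intro σ
    rw [hD]
    apply Finset.sum_nbij' (i := fun p => (σ p.1, σ p.2)) (j := fun p => (σ⁻¹ p.1, σ⁻¹ p.2))
    · intro p hp
      simp only [Finset.mem_offDiag, Finset.mem_univ, true_and] at hp ⊢
      exact fun h => hp (σ.injective h)
    · intro p hp
      simp only [Finset.mem_offDiag, Finset.mem_univ, true_and] at hp ⊢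
      exact fun h => hp (σ⁻¹.injective h)
    · intro p _; simp
    · intro p _; simp
    · intro p _; rfl
  -- step (1): constancy
  have hconst : ∑ p ∈ (Finset.univ : Finset (Fin n)).offDiag,
      (∑ σ : Equiv.Perm (Fin n), F (σ p.1) (σ p.2)) =
      ((Finset.univ : Finset (Fin n)).offDiag.card : ℝ) * S := by
    rw [Finset.sum_congr rfl (fun p hp => ?_), Finset.sum_const, nsmul_eq_mul]
    exact aux_sum_perm_const F (Finset.mem_offDiag.1 hp).2.2 hab
  have hswap : ∑ p ∈ (Finset.univ : Finset (Fin n)).offDiag,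
      (∑ σ : Equiv.Perm (Fin n), F (σ p.1) (σ p.2)) = (n.factorial : ℝ) * D := by
    rw [Finset.sum_comm]
    rw [Finset.sum_congr rfl (fun σ _ => hreindex σ), Finset.sum_const, nsmul_eq_mul]
    congr 1
    simp [Fintype.card_perm]
  -- card of offDiag
  have hcard : ((Finset.univ : Finset (Fin n)).offDiag.card : ℝ) = (n : ℝ) * ((n : ℝ) - 1) := by
    rw [Finset.offDiag_card]
    simp only [Finset.card_univ, Fintype.card_fin]
    have h1 : n * n - n = n * (n - 1) := by
      have := Nat.mul_sub n n 1
      simpa using this.symm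
    rw [h1, Nat.cast_mul, Nat.cast_sub (by omega : 1 ≤ n), Nat.cast_one]
  -- D = 2 P
  have hDP : D = 2 * P := by
    have hod : (Finset.univ : Finset (Fin n)).offDiag =
        (Finset.univ ×ˢ Finset.univ).filter (fun p : Fin n × Fin n => p.1 ≠ p.2) := by
      ext p; simp [Finset.mem_offDiag]
    rw [hD, hod, Finset.sum_filter, Finset.sum_product]
    have hpt : ∀ i j : Fin n, (if i ≠ j then F i j else 0) =
        (if i < j then F i j else 0) + (if j < i then F i j else 0) := by
      intro i j
      rcases lt_trichotomy i j with h | h | h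
      · simp [h, not_lt.2 h.le, h.ne]
      · simp [h]
      · simp [h, not_lt.2 h.le, h.ne']
    simp_rw [hpt]
    simp only [Finset.sum_add_distrib]
    have hQ : ∑ i : Fin n, ∑ j : Fin n, (if j < i then F i j else 0) = P := by
      rw [Finset.sum_comm, hP]
      congr 1; ext i; congr 1; ext j
      rcases lt_or_ge i j with h | h
      · simp [h, hsym i j]
      · simp [not_lt.2 h]
    rw [hQ, hP]; ring
  -- combine
  have hch : ((n.choose 2 : ℕ) : ℝ) * 2 = (n : ℝ) * ((n : ℝ) - 1) := by
    have h2 : n.choose 2 * 2 = n * (n - 1) := by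
      rw [Nat.choose_two_right]
      exact Nat.div_mul_cancel (Nat.even_mul_pred_self n).two_dvd
    calc ((n.choose 2 : ℕ) : ℝ) * 2 = ((n.choose 2 * 2 : ℕ) : ℝ) := by push_cast; ring
      _ = ((n * (n - 1) : ℕ) : ℝ) := by rw [h2]
      _ = (n : ℝ) * ((n : ℝ) - 1) := by push_cast [Nat.cast_sub (by omega : 1 ≤ n)]; ring
  have hch0 : ((n.choose 2 : ℕ) : ℝ) ≠ 0 := by
    exact_mod_cast (Nat.choose_pos hn).ne'
  have hkey : (n : ℝ) * ((n : ℝ) - 1) * S = (n.factorial : ℝ) * (2 * P) := by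
    rw [← hcard, ← hDP, ← hswap, hconst]
  have h3 : ((n.choose 2 : ℕ) : ℝ) * S = (n.factorial : ℝ) * P := by
    linear_combination hkey / 2 + (S / 2) * hch
  have h4 : S = ((n.factorial : ℝ) * P) / ((n.choose 2 : ℕ) : ℝ) := by
    rw [eq_div_iff hch0]
    linear_combination h3
  rw [h4]
  ring

lemma aux_count {n : ℕ} (hn : 2 ≤ n) :
    ∑ i : Fin n, ∑ j : Fin n, (if i < j then (1:ℝ) else 0) = (n.choose 2 : ℝ) := by
  have hab : (⟨0, by omega⟩ : Fin n) ≠ ⟨1, by omega⟩ := by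
    simp [Fin.ext_iff]
  have h := aux_sum_perm hn (fun _ _ => (1:ℝ)) (fun _ _ => rfl) hab
  simp only [Finset.sum_const, Finset.card_univ, Fintype.card_perm, Fintype.card_fin,
    nsmul_eq_mul, mul_one] at h
  have hch0 : ((n.choose 2 : ℕ) : ℝ) ≠ 0 := by
    exact_mod_cast (Nat.choose_pos hn).ne'
  have hf0 : ((n.factorial : ℕ) : ℝ) ≠ 0 := by
    exact_mod_cast n.factorial_pos.ne'
  have h4 : ((n.factorial : ℕ) : ℝ) * (((n.choose 2 : ℕ) : ℝ)⁻¹ *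
      ∑ i : Fin n, ∑ j : Fin n, (if i < j then (1:ℝ) else 0)) = (n.factorial : ℝ) * 1 := by
    rw [mul_one, ← mul_assoc]; exact h.symm
  have h5 := mul_left_cancel₀ hf0 h4
  have h6 := (inv_mul_eq_one₀ hch0).1 h5
  exact h6.symm

lemma aux_chernoff {α : Type*} [MeasurableSpace α] (ν : Measure α) [IsProbabilityMeasure ν]
    {n : ℕ} (hn : 2 ≤ n) (G : α × α → ℝ) (hG : Measurable G)
    (hsym : ∀ y z, G (y, z) = G (z, y)) {M ε : ℝ} (hM : 0 < M) (hε : 0 < ε)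
    (hGb : ∀ p, 0 ≤ G p ∧ G p ≤ M) (c : ℝ) (hc : c = 1 ∨ c = -1) :
    (Measure.pi fun _ : Fin n => ν)
      {x : Fin n → α | 3 * ε / 2 ≤ c * ((n.choose 2 : ℝ)⁻¹ *
          (∑ i : Fin n, ∑ j : Fin n, if i < j then G (x i, x j) else 0) -
        ∫ p, G p ∂(ν.prod ν))} ≤
      ENNReal.ofReal (Real.exp (-2 * (ε/2)^2 * ((n / 2 : ℕ) : ℝ) / M^2)) := by
  classical
  set m : ℕ := n / 2 with hm
  have hm1 : 1 ≤ m := by omega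
  have hmn : 2 * m ≤ n := by omega
  have hmR : (1:ℝ) ≤ (m:ℝ) := by exact_mod_cast hm1
  have hmR0 : (m:ℝ) ≠ 0 := by positivity
  set Δ' : ℝ := ∫ p, G p ∂(ν.prod ν) with hΔ'
  have hGint : Integrable G (ν.prod ν) := by
    apply Integrable.mono' (integrable_const M) hG.aestronglyMeasurable
    exact Filter.Eventually.of_forall fun p => by
      rw [Real.norm_eq_abs, abs_of_nonneg (hGb p).1]; exact (hGb p).2
  have hΔ'0 : 0 ≤ Δ' := integral_nonneg fun p => (hGb p).1
  have hΔ'M : Δ' ≤ M := by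
    have h := integral_mono hGint (integrable_const M) (fun p => (hGb p).2)
    simpa using h
  set U : (Fin n → α) → ℝ := fun x => (n.choose 2 : ℝ)⁻¹ *
    (∑ i : Fin n, ∑ j : Fin n, if i < j then G (x i, x j) else 0) with hUdef
  have hch0 : ((n.choose 2 : ℕ) : ℝ) ≠ 0 := by
    exact_mod_cast (Nat.choose_pos hn).ne'
  have hU0 : ∀ x, 0 ≤ U x := by
    intro x
    apply mul_nonneg (by positivity)
    apply Finset.sum_nonneg; intro i _
    apply Finset.sum_nonneg; intro j _
    split
    · exact (hGb _).1
    · exact le_rfl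
  have hUM : ∀ x, U x ≤ M := by
    intro x
    have hb : (∑ i : Fin n, ∑ j : Fin n, if i < j then G (x i, x j) else 0) ≤
        ((n.choose 2 : ℕ) : ℝ) * M := by
      calc (∑ i : Fin n, ∑ j : Fin n, if i < j then G (x i, x j) else 0)
          ≤ ∑ i : Fin n, ∑ j : Fin n, (if i < j then (1:ℝ) else 0) * M := by
            apply Finset.sum_le_sum; intro i _
            apply Finset.sum_le_sum; intro j _
            split
            · simpa using (hGb (x i, x j)).2
            · simp
        _ = (∑ i : Fin n, ∑ j : Fin n, (if i < j then (1:ℝ) else 0)) * M := by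
            simp only [Finset.sum_mul]
        _ = ((n.choose 2 : ℕ) : ℝ) * M := by rw [aux_count hn]
    calc U x ≤ ((n.choose 2 : ℝ))⁻¹ * (((n.choose 2 : ℕ) : ℝ) * M) :=
        mul_le_mul_of_nonneg_left hb (by positivity)
      _ = M := by field_simp
  show (Measure.pi fun _ : Fin n => ν) {x : Fin n → α | 3 * ε / 2 ≤ c * (U x - Δ')} ≤
    ENNReal.ofReal (Real.exp (-2 * (ε/2)^2 * (m : ℝ) / M^2))
  have hc2 : c^2 = 1 := by rcases hc with rfl | rfl <;> norm_num
  have hcabs : |c| = 1 := by rcases hc with rfl | rfl <;> norm_num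
  rcases lt_or_ge M ε with hMε | hεM
  · -- event is empty since |U - Δ'| ≤ M < ε
    have hempty : {x : Fin n → α | 3 * ε / 2 ≤ c * (U x - Δ')} = ∅ := by
      ext x
      simp only [Set.mem_setOf_eq, Set.mem_empty_iff_false, iff_false, not_le]
      have h1 : c * (U x - Δ') ≤ M := by
        rcases hc with rfl | rfl
        · rw [one_mul]; linarith [hU0 x, hUM x]
        · rw [neg_one_mul]; linarith [hU0 x, hUM x]
      linarith
    rw [hempty]
    simp
  -- main case : ε ≤ M
  set lam : ℝ := ε * m / M^2 with hlam
  have hlampos : 0 < lam := by positivity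
  set t : ℝ := c * lam / m with ht
  have htabs : |t| * M ≤ 1 := by
    have h1 : |t| = lam / m := by
      rw [ht, abs_div, abs_mul, hcabs, one_mul, abs_of_pos hlampos,
        abs_of_pos (by positivity : (0:ℝ) < (m:ℝ))]
    rw [h1, hlam]
    rw [div_div, div_mul_eq_mul_div]
    rw [div_le_one (by positivity)]
    calc ε * (m:ℝ) * M = ε * M * m := by ring
      _ ≤ M * M * m := by
        have := mul_le_mul_of_nonneg_right (mul_le_mul_of_nonneg_right hεM hM.le)
          (le_of_lt (by positivity : (0:ℝ) < (m:ℝ)))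
        linarith [this]
      _ = M^2 * m := by ring
  -- index pairing
  have h2k : ∀ k : Fin m, 2 * k.1 < n := fun k => by omega
  have h2k1 : ∀ k : Fin m, 2 * k.1 + 1 < n := fun k => by omega
  set pr : Fin m ⊕ Fin m → Fin n :=
    Sum.elim (fun k => ⟨2 * k.1, h2k k⟩) (fun k => ⟨2 * k.1 + 1, h2k1 k⟩) with hpr
  have hprinj : Function.Injective pr := by
    intro u v huv
    rcases u with u | u <;> rcases v with v | v <;>
      simp only [hpr, Sum.elim_inl, Sum.elim_inr, Fin.mk.injEq] at huv <;>
      first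
        | (exact congrArg Sum.inl (Fin.ext (by omega)))
        | (exact congrArg Sum.inr (Fin.ext (by omega)))
        | omega
  set V : Equiv.Perm (Fin n) → (Fin n → α) → ℝ := fun σ x =>
    ((m:ℝ))⁻¹ * ∑ k : Fin m, G (x (σ (pr (Sum.inl k))), x (σ (pr (Sum.inr k)))) with hV
  -- pointwise identity
  have hID : ∀ x, ∑ σ : Equiv.Perm (Fin n), V σ x = (n.factorial : ℝ) * U x := by
    intro x
    rw [hV]
    simp only
    rw [← Finset.mul_sum, Finset.sum_comm]
    have hterm : ∀ k : Fin m,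
        ∑ σ : Equiv.Perm (Fin n), G (x (σ (pr (Sum.inl k))), x (σ (pr (Sum.inr k)))) =
        (n.factorial : ℝ) * ((n.choose 2 : ℝ))⁻¹ *
          ∑ i : Fin n, ∑ j : Fin n, (if i < j then G (x i, x j) else 0) := by
      intro k
      apply aux_sum_perm hn (fun i j => G (x i, x j)) (fun i j => hsym (x i) (x j))
      simp [hpr, Fin.ext_iff]
    rw [Finset.sum_congr rfl fun k _ => hterm k, Finset.sum_const, Finset.card_univ,
      Fintype.card_fin, nsmul_eq_mul]
    rw [hUdef]
    field_simp
  -- measurability and bounds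
  haveI hPP : IsProbabilityMeasure (Measure.pi fun _ : Fin n => ν) := inferInstance
  have hf0 : ((n.factorial : ℕ) : ℝ) ≠ 0 := by exact_mod_cast n.factorial_pos.ne'
  have hpair : ∀ (i j : Fin n), Measurable (fun x : Fin n → α => G (x i, x j)) := by
    intro i j
    exact hG.comp ((measurable_pi_apply i).prodMk (measurable_pi_apply j))
  have hUmeas : Measurable U := by
    apply Measurable.const_mul
    apply Finset.measurable_sum; intro i _
    apply Finset.measurable_sum; intro j _
    by_cases h : i < j
    · simp only [if_pos h]; exact hpair i j
    · simp only [if_neg h]; exact measurable_const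
  have hVmeas : ∀ σ, Measurable (V σ) := by
    intro σ
    apply Measurable.const_mul
    apply Finset.measurable_sum; intro k _
    exact hpair _ _
  have hV0 : ∀ σ x, 0 ≤ V σ x := by
    intro σ x
    apply mul_nonneg (by positivity)
    exact Finset.sum_nonneg fun k _ => (hGb _).1
  have hVM : ∀ σ x, V σ x ≤ M := by
    intro σ x
    rw [hV]
    simp only
    have hs : ∑ k : Fin m, G (x (σ (pr (Sum.inl k))), x (σ (pr (Sum.inr k)))) ≤ (m:ℝ) * M := by
      calc ∑ k : Fin m, G (x (σ (pr (Sum.inl k))), x (σ (pr (Sum.inr k))))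
          ≤ ∑ _k : Fin m, M := Finset.sum_le_sum fun k _ => (hGb _).2
        _ = (m:ℝ) * M := by simp [mul_comm]
    calc ((m:ℝ))⁻¹ * ∑ k : Fin m, G (x (σ (pr (Sum.inl k))), x (σ (pr (Sum.inr k))))
        ≤ ((m:ℝ))⁻¹ * ((m:ℝ) * M) := by
          apply mul_le_mul_of_nonneg_left hs (by positivity)
      _ = M := by field_simp
  have habsUD : ∀ x, |U x - Δ'| ≤ M := fun x =>
    abs_le.2 ⟨by linarith [hU0 x, hΔ'M], by linarith [hUM x, hΔ'0]⟩
  have habsVD : ∀ σ x, |V σ x - Δ'| ≤ M := fun σ x =>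
    abs_le.2 ⟨by linarith [hV0 σ x, hΔ'M], by linarith [hVM σ x, hΔ'0]⟩
  -- integrability
  have hfint : Integrable (fun x => Real.exp (lam * (c * (U x - Δ'))))
      (Measure.pi fun _ : Fin n => ν) := by
    apply Integrable.mono' (integrable_const (Real.exp (lam * M)))
      ((measurable_const.mul ((measurable_const.mul (hUmeas.sub measurable_const)))).exp
        ).aestronglyMeasurable
    refine Filter.Eventually.of_forall fun x => ?_
    rw [Real.norm_of_nonneg (Real.exp_pos _).le]
    apply Real.exp_le_exp.2
    apply mul_le_mul_of_nonneg_left _ hlampos.le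
    calc c * (U x - Δ') ≤ |c * (U x - Δ')| := le_abs_self _
      _ = |U x - Δ'| := by rw [abs_mul, hcabs, one_mul]
      _ ≤ M := habsUD x
  have hgint : ∀ σ, Integrable (fun x => Real.exp (lam * c * (V σ x - Δ')))
      (Measure.pi fun _ : Fin n => ν) := by
    intro σ
    apply Integrable.mono' (integrable_const (Real.exp (lam * M)))
      ((measurable_const.mul ((hVmeas σ).sub measurable_const)).exp).aestronglyMeasurable
    refine Filter.Eventually.of_forall fun x => ?_
    rw [Real.norm_of_nonneg (Real.exp_pos _).le]
    apply Real.exp_le_exp.2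
    calc lam * c * (V σ x - Δ') ≤ |lam * c * (V σ x - Δ')| := le_abs_self _
      _ = lam * |V σ x - Δ'| := by
          rw [abs_mul, abs_mul, hcabs, abs_of_pos hlampos, mul_one]
      _ ≤ lam * M := mul_le_mul_of_nonneg_left (habsVD σ x) hlampos.le
  -- Jensen pointwise
  have hJen : ∀ x, Real.exp (lam * (c * (U x - Δ'))) ≤
      ∑ σ : Equiv.Perm (Fin n), ((n.factorial : ℝ))⁻¹ *
        Real.exp (lam * c * (V σ x - Δ')) := by
    intro x
    have hw1 : ∑ _σ : Equiv.Perm (Fin n), ((n.factorial:ℝ))⁻¹ = 1 := by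
      rw [Finset.sum_const, Finset.card_univ, Fintype.card_perm, Fintype.card_fin,
        nsmul_eq_mul, mul_inv_cancel₀ hf0]
    have hsum : ∑ σ : Equiv.Perm (Fin n), (lam * c * (V σ x - Δ')) =
        lam * c * ((n.factorial:ℝ) * (U x - Δ')) := by
      rw [← Finset.mul_sum]
      congr 1
      rw [Finset.sum_sub_distrib, hID x, Finset.sum_const, Finset.card_univ,
        Fintype.card_perm, Fintype.card_fin, nsmul_eq_mul]
      ring
    have harg : lam * (c * (U x - Δ')) =
        ∑ σ : Equiv.Perm (Fin n), ((n.factorial:ℝ))⁻¹ • (lam * c * (V σ x - Δ')) := by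
      simp only [smul_eq_mul]
      rw [← Finset.mul_sum, hsum]
      field_simp
    rw [harg]
    have := convexOn_exp.map_sum_le (t := (Finset.univ : Finset (Equiv.Perm (Fin n))))
      (w := fun _ => ((n.factorial:ℝ))⁻¹)
      (p := fun σ => lam * c * (V σ x - Δ')) (fun _ _ => by positivity) hw1
      (fun _ _ => Set.mem_univ _)
    simpa using this
  -- MGF bound per permutation
  set ψ : α × α → ℝ := fun p => G p - Δ' with hψ
  have hψmeas : Measurable ψ := hG.sub measurable_const
  have hψb : ∀ p, |ψ p| ≤ M := fun p =>
    abs_le.2 ⟨by have := (hGb p).1; simp only [hψ]; linarith,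
      by have := (hGb p).2; simp only [hψ]; linarith⟩
  have hψ0 : ∫ p, ψ p ∂(ν.prod ν) = 0 := by
    rw [hψ]
    rw [integral_sub hGint (integrable_const _)]
    simp [hΔ']
  have hmgf1 : ∫ p, Real.exp (t * ψ p) ∂(ν.prod ν) ≤ Real.exp (3/4 * t^2 * M^2) :=
    aux_mgf (ν.prod ν) ψ hψmeas hM hψb hψ0 htabs
  have hmgfσ : ∀ σ : Equiv.Perm (Fin n),
      ∫ x, Real.exp (lam * c * (V σ x - Δ')) ∂(Measure.pi fun _ : Fin n => ν) ≤
        Real.exp (3/4 * lam^2 * M^2 / m) := by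
    intro σ
    have hexpand : ∀ x : Fin n → α, Real.exp (lam * c * (V σ x - Δ')) =
        ∏ k : Fin m, (fun p => Real.exp (t * ψ p))
          (x ((fun u => σ (pr u)) (Sum.inl k)), x ((fun u => σ (pr u)) (Sum.inr k))) := by
      intro x
      rw [← Real.exp_sum]
      congr 1
      have hrhs : ∑ k : Fin m, t * ψ (x (σ (pr (Sum.inl k))), x (σ (pr (Sum.inr k)))) =
          t * ((∑ k : Fin m, G (x (σ (pr (Sum.inl k))), x (σ (pr (Sum.inr k))))) -
            (m:ℝ) * Δ') := by
        rw [← Finset.mul_sum]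
        congr 1
        rw [hψ]
        simp only
        rw [Finset.sum_sub_distrib, Finset.sum_const, Finset.card_univ, Fintype.card_fin,
          nsmul_eq_mul]
      rw [hrhs, hV, ht]
      simp only
      have hminv : ((m:ℝ))⁻¹ * (m:ℝ) = 1 := inv_mul_cancel₀ hmR0
      linear_combination (c * lam * Δ') * hminv
    simp_rw [hexpand]
    rw [aux_int_pairs ν hmn (fun u => σ (pr u)) (σ.injective.comp hprinj)
      (fun p => Real.exp (t * ψ p)) ((measurable_const.mul hψmeas).exp)]
    calc (∫ p, Real.exp (t * ψ p) ∂(ν.prod ν)) ^ m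
        ≤ (Real.exp (3/4 * t^2 * M^2)) ^ m := by
          apply pow_le_pow_left₀ (integral_nonneg fun p => (Real.exp_pos _).le) hmgf1
      _ = Real.exp ((m:ℝ) * (3/4 * t^2 * M^2)) := by
          rw [← Real.exp_nat_mul]
      _ = Real.exp (3/4 * lam^2 * M^2 / m) := by
          congr 1
          have ht2 : t^2 = lam^2 / (m:ℝ)^2 := by
            rw [ht, div_pow, mul_pow, hc2, one_mul]
          rw [ht2]
          field_simp
  -- assemble: integral bound
  have hsum_int : Integrable (fun x => ∑ σ : Equiv.Perm (Fin n),
      ((n.factorial : ℝ))⁻¹ * Real.exp (lam * c * (V σ x - Δ')))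
      (Measure.pi fun _ : Fin n => ν) :=
    integrable_finset_sum _ fun σ _ => (hgint σ).const_mul _
  have hIf : ∫ x, Real.exp (lam * (c * (U x - Δ'))) ∂(Measure.pi fun _ : Fin n => ν) ≤
      Real.exp (3/4 * lam^2 * M^2 / m) := by
    calc ∫ x, Real.exp (lam * (c * (U x - Δ'))) ∂(Measure.pi fun _ : Fin n => ν)
        ≤ ∫ x, (∑ σ : Equiv.Perm (Fin n), ((n.factorial : ℝ))⁻¹ *
            Real.exp (lam * c * (V σ x - Δ'))) ∂(Measure.pi fun _ : Fin n => ν) :=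
          integral_mono hfint hsum_int hJen
      _ = ∑ σ : Equiv.Perm (Fin n), ((n.factorial : ℝ))⁻¹ *
            ∫ x, Real.exp (lam * c * (V σ x - Δ')) ∂(Measure.pi fun _ : Fin n => ν) := by
          rw [integral_finset_sum _ fun σ _ => (hgint σ).const_mul _]
          exact Finset.sum_congr rfl fun σ _ => integral_const_mul _ _
      _ ≤ ∑ _σ : Equiv.Perm (Fin n), ((n.factorial : ℝ))⁻¹ *
            Real.exp (3/4 * lam^2 * M^2 / m) := by
          apply Finset.sum_le_sum
          intro σ _
          exact mul_le_mul_of_nonneg_left (hmgfσ σ) (by positivity)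
      _ = Real.exp (3/4 * lam^2 * M^2 / m) := by
          rw [Finset.sum_const, Finset.card_univ, Fintype.card_perm, Fintype.card_fin,
            nsmul_eq_mul, ← mul_assoc, mul_inv_cancel₀ hf0, one_mul]
  -- Markov
  have hsubset : {x : Fin n → α | 3 * ε / 2 ≤ c * (U x - Δ')} ⊆
      {x : Fin n → α | Real.exp (lam * (3 * ε / 2)) ≤ Real.exp (lam * (c * (U x - Δ')))} := by
    intro x hx
    exact Real.exp_le_exp.2 (mul_le_mul_of_nonneg_left hx hlampos.le)
  have hmar := aux_markov hfint (fun x => (Real.exp_pos _).le)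
    (Real.exp_pos (lam * (3 * ε / 2))) hIf hsubset
  refine hmar.trans (ENNReal.ofReal_le_ofReal ?_)
  rw [← Real.exp_sub]
  apply Real.exp_le_exp.2
  have hrw : 3/4 * lam^2 * M^2 / m - lam * (3 * ε / 2) =
      -(3/4) * (ε^2 * (m:ℝ) / M^2) := by
    rw [hlam]
    field_simp
    ring
  rw [hrw]
  have hpos : 0 ≤ ε^2 * (m:ℝ) / M^2 := by positivity
  have h2 : -2 * (ε/2)^2 * (m:ℝ) / M^2 = -(1/2) * (ε^2 * (m:ℝ) / M^2) := by ring
  rw [h2]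
  linarith

/-- **Concentration of the Gini-mean-difference U-statistic.** For `X₁, …, Xₙ` i.i.d.
random vectors in `ℝ^q` (`n ≥ 2`) with `B = E[exp(s ‖X₁‖)] < ∞` and
`Δ = E‖X₁ - X₂‖ < ∞`, and `Uₙ = C(n,2)⁻¹ ∑_{i<j} ‖Xᵢ - Xⱼ‖`: if `M, ε > 0` satisfy
`E[‖X₁ - X₂‖ 𝟙(‖X₁ - X₂‖ > M)] ≤ ε/2`, then
`P(|Uₙ - Δ| ≥ 2ε) ≤ 2 exp(-2 (ε/2)² ⌊n/2⌋ / M²) + n B exp(-s M / 2)`. -/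
theorem gmd_ustatistic_concentration (q n : ℕ) (hn : 2 ≤ n)
    (ν : Measure (EuclideanSpace ℝ (Fin q))) [IsProbabilityMeasure ν]
    (s B : ℝ) (hs : 0 < s)
    (hBint : Integrable (fun x : EuclideanSpace ℝ (Fin q) => Real.exp (s * ‖x‖)) ν)
    (hB : B = ∫ x, Real.exp (s * ‖x‖) ∂ν)
    (hΔint : Integrable
      (fun p : EuclideanSpace ℝ (Fin q) × EuclideanSpace ℝ (Fin q) => ‖p.1 - p.2‖)
      (ν.prod ν))
    (M ε : ℝ) (hM : 0 < M) (hε : 0 < ε)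
    (htrunc : ∫ y, ∫ z, (if M < ‖y - z‖ then ‖y - z‖ else 0) ∂ν ∂ν ≤ ε / 2) :
    (Measure.pi fun _ : Fin n => ν)
        {x : Fin n → EuclideanSpace ℝ (Fin q) |
          2 * ε ≤ |(n.choose 2 : ℝ)⁻¹ *
                (∑ i : Fin n, ∑ j : Fin n, if i < j then ‖x i - x j‖ else 0) -
              ∫ y, ∫ z, ‖y - z‖ ∂ν ∂ν|} ≤
      ENNReal.ofReal (2 * Real.exp (-2 * (ε / 2) ^ 2 * (↑(n / 2) : ℝ) / M ^ 2) +
        (n : ℝ) * B * Real.exp (-s * M / 2)) := by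
  classical
  set E := EuclideanSpace ℝ (Fin q)
  set G : E × E → ℝ := fun p => if ‖p.1 - p.2‖ ≤ M then ‖p.1 - p.2‖ else 0 with hGdef
  set tr : E × E → ℝ := fun p => if M < ‖p.1 - p.2‖ then ‖p.1 - p.2‖ else 0 with htr
  have hKmeas : Measurable (fun p : E × E => ‖p.1 - p.2‖) :=
    (continuous_fst.sub continuous_snd).norm.measurable
  have hGmeas : Measurable G := by
    apply Measurable.ite _ hKmeas measurable_const
    exact measurableSet_le hKmeas measurable_const
  have htrmeas : Measurable tr := by
    apply Measurable.ite _ hKmeas measurable_const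
    exact measurableSet_lt measurable_const hKmeas
  have hsym : ∀ y z : E, G (y, z) = G (z, y) := by
    intro y z
    simp only [hGdef, norm_sub_rev y z]
  have hGb : ∀ p : E × E, 0 ≤ G p ∧ G p ≤ M := by
    intro p
    simp only [hGdef]
    split
    · exact ⟨norm_nonneg _, by assumption⟩
    · exact ⟨le_rfl, hM.le⟩
  have htrint : Integrable tr (ν.prod ν) := by
    apply hΔint.mono htrmeas.aestronglyMeasurable
    refine Filter.Eventually.of_forall fun p => ?_
    simp only [htr, Real.norm_eq_abs]
    split
    · exact le_rfl
    · simp [abs_nonneg]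
  have hGint : Integrable G (ν.prod ν) := by
    apply Integrable.mono' (integrable_const M) hGmeas.aestronglyMeasurable
    exact Filter.Eventually.of_forall fun p => by
      rw [Real.norm_eq_abs, abs_of_nonneg (hGb p).1]; exact (hGb p).2
  -- iterated integrals to product integrals
  have hΔeq : ∫ y, ∫ z, ‖y - z‖ ∂ν ∂ν = ∫ p, (fun p : E × E => ‖p.1 - p.2‖) p ∂(ν.prod ν) :=
    (integral_prod _ hΔint).symm
  have htreq : ∫ y, ∫ z, (if M < ‖y - z‖ then ‖y - z‖ else 0) ∂ν ∂ν = ∫ p, tr p ∂(ν.prod ν) :=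
    (integral_prod _ htrint).symm
  set Δ : ℝ := ∫ p, (fun p : E × E => ‖p.1 - p.2‖) p ∂(ν.prod ν) with hΔdef
  set Δ' : ℝ := ∫ p, G p ∂(ν.prod ν) with hΔ'def
  have hT0 : 0 ≤ ∫ p, tr p ∂(ν.prod ν) := by
    apply integral_nonneg
    intro p
    simp only [htr]
    split
    · exact norm_nonneg _
    · exact le_rfl
  have hTε : ∫ p, tr p ∂(ν.prod ν) ≤ ε / 2 := by rw [← htreq]; exact htrunc
  have hsplit : ∀ p : E × E, ‖p.1 - p.2‖ = G p + tr p := by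
    intro p
    simp only [hGdef, htr]
    rcases le_or_gt ‖p.1 - p.2‖ M with h | h
    · rw [if_pos h, if_neg (not_lt.2 h), add_zero]
    · rw [if_neg (not_le.2 h), if_pos h, zero_add]
  have hΔΔ' : Δ = Δ' + ∫ p, tr p ∂(ν.prod ν) := by
    rw [hΔdef, hΔ'def, ← integral_add hGint htrint]
    exact integral_congr_ae (Filter.Eventually.of_forall hsplit)
  -- the three events
  set bad : Set (Fin n → E) := ⋃ i : Fin n, (fun x => x i) ⁻¹' {y : E | M / 2 < ‖y‖} with hbad
  set A1 : Set (Fin n → E) := {x | 3 * ε / 2 ≤ (1:ℝ) * ((n.choose 2 : ℝ)⁻¹ *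
      (∑ i : Fin n, ∑ j : Fin n, if i < j then G (x i, x j) else 0) -
    ∫ p, G p ∂(ν.prod ν))} with hA1
  set A2 : Set (Fin n → E) := {x | 3 * ε / 2 ≤ (-1:ℝ) * ((n.choose 2 : ℝ)⁻¹ *
      (∑ i : Fin n, ∑ j : Fin n, if i < j then G (x i, x j) else 0) -
    ∫ p, G p ∂(ν.prod ν))} with hA2
  have hincl : {x : Fin n → E |
      2 * ε ≤ |(n.choose 2 : ℝ)⁻¹ *
            (∑ i : Fin n, ∑ j : Fin n, if i < j then ‖x i - x j‖ else 0) -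
          ∫ y, ∫ z, ‖y - z‖ ∂ν ∂ν|} ⊆ (bad ∪ A1) ∪ A2 := by
    intro x hx
    simp only [Set.mem_setOf_eq, hΔeq] at hx
    by_cases hb : ∃ i, M / 2 < ‖x i‖
    · left; left
      rw [hbad]
      obtain ⟨i, hi⟩ := hb
      exact Set.mem_iUnion.2 ⟨i, hi⟩
    · push_neg at hb
      have hxeq : (∑ i : Fin n, ∑ j : Fin n, if i < j then ‖x i - x j‖ else 0) =
          (∑ i : Fin n, ∑ j : Fin n, if i < j then G (x i, x j) else 0) := by
        apply Finset.sum_congr rfl; intro i _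
        apply Finset.sum_congr rfl; intro j _
        split
        · simp only [hGdef]
          rw [if_pos]
          calc ‖x i - x j‖ ≤ ‖x i‖ + ‖x j‖ := norm_sub_le _ _
            _ ≤ M / 2 + M / 2 := add_le_add (hb i) (hb j)
            _ = M := by ring
        · rfl
      rw [hxeq] at hx
      set U' := (n.choose 2 : ℝ)⁻¹ *
        (∑ i : Fin n, ∑ j : Fin n, if i < j then G (x i, x j) else 0) with hU'
      have hkey : 3 * ε / 2 ≤ |U' - Δ'| := by
        have h1 : |U' - Δ| ≥ 2 * ε := hx
        have h2 : |Δ - Δ'| ≤ ε / 2 := by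
          rw [hΔΔ', abs_of_nonneg (by linarith : (0:ℝ) ≤ Δ' + ∫ p, tr p ∂(ν.prod ν) - Δ')]
          · simp only [add_sub_cancel_left]
            exact hTε
        calc 3 * ε / 2 = 2 * ε - ε / 2 := by ring
          _ ≤ |U' - Δ| - |Δ - Δ'| := by linarith
          _ ≤ |U' - Δ'| := by
              have := abs_sub_abs_le_abs_sub (U' - Δ) (Δ' - Δ)
              have h3 : U' - Δ - (Δ' - Δ) = U' - Δ' := by ring
              have h4 : |Δ' - Δ| = |Δ - Δ'| := abs_sub_comm _ _
              rw [h3] at this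
              linarith
      rcases abs_cases (U' - Δ') with ⟨habs, _⟩ | ⟨habs, _⟩
      · left; right
        rw [hA1]
        simp only [Set.mem_setOf_eq, one_mul]
        rw [← hΔ'def, ← hU']
        linarith [hkey, habs]
      · right
        rw [hA2]
        simp only [Set.mem_setOf_eq, neg_one_mul]
        rw [← hΔ'def, ← hU']
        linarith [hkey, habs]
  -- measure bounds
  have hA1bound : (Measure.pi fun _ : Fin n => ν) A1 ≤
      ENNReal.ofReal (Real.exp (-2 * (ε/2)^2 * ((n / 2 : ℕ) : ℝ) / M^2)) := by
    rw [hA1]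
    exact aux_chernoff ν hn G hGmeas hsym hM hε hGb 1 (Or.inl rfl)
  have hA2bound : (Measure.pi fun _ : Fin n => ν) A2 ≤
      ENNReal.ofReal (Real.exp (-2 * (ε/2)^2 * ((n / 2 : ℕ) : ℝ) / M^2)) := by
    rw [hA2]
    exact aux_chernoff ν hn G hGmeas hsym hM hε hGb (-1) (Or.inr rfl)
  have hB0 : 0 ≤ B := by
    rw [hB]
    exact integral_nonneg fun y => (Real.exp_pos _).le
  have hbadbound : (Measure.pi fun _ : Fin n => ν) bad ≤
      ENNReal.ofReal ((n : ℝ) * (B * Real.exp (-s * M / 2))) := by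
    rw [hbad]
    calc (Measure.pi fun _ : Fin n => ν) (⋃ i : Fin n, (fun x => x i) ⁻¹' {y : E | M / 2 < ‖y‖})
        ≤ ∑ i : Fin n, (Measure.pi fun _ : Fin n => ν) ((fun x => x i) ⁻¹' {y : E | M / 2 < ‖y‖}) :=
          measure_iUnion_fintype_le _ _
      _ = ∑ _i : Fin n, ν {y : E | M / 2 < ‖y‖} := by
          apply Finset.sum_congr rfl
          intro i _
          exact aux_eval ν n i (measurableSet_lt measurable_const measurable_norm)
      _ ≤ ∑ _i : Fin n, ENNReal.ofReal (B * Real.exp (-s * M / 2)) := by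
          apply Finset.sum_le_sum
          intro i _
          have hmar := aux_markov hBint (fun y => (Real.exp_pos _).le)
            (Real.exp_pos (s * (M / 2))) (le_of_eq hB.symm)
            (T := {y : E | M / 2 < ‖y‖}) ?_
          · refine hmar.trans (le_of_eq ?_)
            congr 1
            rw [div_eq_mul_inv, ← Real.exp_neg]
            congr 1
            ring
          · intro y hy
            simp only [Set.mem_setOf_eq] at hy ⊢
            apply Real.exp_le_exp.2
            have : M / 2 ≤ ‖y‖ := hy.le
            nlinarith
      _ = ENNReal.ofReal ((n : ℝ) * (B * Real.exp (-s * M / 2))) := by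
          rw [Finset.sum_const, Finset.card_univ, Fintype.card_fin, nsmul_eq_mul]
          rw [← ENNReal.ofReal_natCast n, ← ENNReal.ofReal_mul (by positivity)]
  refine le_trans (measure_mono hincl) ?_
  calc (Measure.pi fun _ : Fin n => ν) ((bad ∪ A1) ∪ A2)
      ≤ ((Measure.pi fun _ : Fin n => ν) (bad ∪ A1)) + (Measure.pi fun _ : Fin n => ν) A2 :=
        measure_union_le _ _
    _ ≤ (((Measure.pi fun _ : Fin n => ν) bad) + (Measure.pi fun _ : Fin n => ν) A1) +
        (Measure.pi fun _ : Fin n => ν) A2 := by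
        gcongr
        exact measure_union_le _ _
    _ ≤ (ENNReal.ofReal ((n : ℝ) * (B * Real.exp (-s * M / 2))) +
          ENNReal.ofReal (Real.exp (-2 * (ε/2)^2 * ((n / 2 : ℕ) : ℝ) / M^2))) +
        ENNReal.ofReal (Real.exp (-2 * (ε/2)^2 * ((n / 2 : ℕ) : ℝ) / M^2)) := by
        gcongr
    _ = ENNReal.ofReal (2 * Real.exp (-2 * (ε / 2) ^ 2 * ((n / 2 : ℕ) : ℝ) / M ^ 2) +
        (n : ℝ) * B * Real.exp (-s * M / 2)) := by
        rw [← ENNReal.ofReal_add (by positivity) (by positivity),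
          ← ENNReal.ofReal_add (by positivity) (by positivity)]
        congr 1
        ring
end

section
/- Let X be a categorical random variable taking values in a finite set V equipped with the discrete metric d(x_1, x_2) = 𝟙(x_1 ≠ x_2), and let Y be a categorical variable taking values L_1, …, L_K with p_k = P(Y = L_k) > 0. Define GI(X) = 1 − Σ_{v ∈ V} P(X = v)² and GI(X | Y = L_k) = 1 − Σ_{v ∈ V} P(X = v | Y = L_k)², and assume GI(X) > 0. Then the Gini distance correlation of (X, Y) under the discrete metric equals the normalized Gini impurity reduction: ρ = ( GI(X) − Σ_{k=1}^K p_k GI(X | Y = L_k) ) / GI(X). -/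
open MeasureTheory ProbabilityTheory

lemma double_integral_discrete_metric {Ω V : Type*} [MeasurableSpace Ω]
    [Fintype V] [DecidableEq V] [MeasurableSpace V] [MeasurableSingletonClass V]
    (ν : Measure Ω) [IsProbabilityMeasure ν] (X : Ω → V) (hX : Measurable X) :
    ∫ ω₁, ∫ ω₂, (if X ω₁ ≠ X ω₂ then (1 : ℝ) else 0) ∂ν ∂ν
      = 1 - ∑ v : V, (ν (X ⁻¹' {v})).toReal ^ 2 := by
  have hinner : ∀ ω₁, ∫ ω₂, (if X ω₁ ≠ X ω₂ then (1 : ℝ) else 0) ∂ν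
      = 1 - (ν (X ⁻¹' {X ω₁})).toReal := by
    intro ω₁
    have h1 : (fun ω₂ => (if X ω₁ ≠ X ω₂ then (1 : ℝ) else 0))
        = fun ω₂ => 1 - Set.indicator (X ⁻¹' {X ω₁}) (fun _ => (1 : ℝ)) ω₂ := by
      funext ω₂
      by_cases h : X ω₁ = X ω₂ <;>
        simp [h, Set.indicator_apply, Set.mem_preimage, eq_comm]
    rw [h1, integral_sub (integrable_const 1)]
    · simp [integral_indicator_const, hX (MeasurableSet.singleton _), measureReal_def]
    · exact (integrable_const (1 : ℝ)).indicator (hX (MeasurableSet.singleton _))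
  simp_rw [hinner]
  have hmeas : Measurable fun v : V => (ν (X ⁻¹' {v})).toReal :=
    measurable_of_countable _
  have : IsProbabilityMeasure (ν.map X) := Measure.isProbabilityMeasure_map hX.aemeasurable
  have hint : Integrable (fun ω₁ => (ν (X ⁻¹' {X ω₁})).toReal) ν :=
    (integrable_map_measure hmeas.aestronglyMeasurable hX.aemeasurable).mp
      Integrable.of_finite
  have hmap : ∫ ω₁, (ν (X ⁻¹' {X ω₁})).toReal ∂ν
      = ∑ v : V, (ν (X ⁻¹' {v})).toReal ^ 2 := by
    rw [← integral_map hX.aemeasurable hmeas.aestronglyMeasurable]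
    rw [integral_fintype Integrable.of_finite]
    refine Finset.sum_congr rfl fun v _ => ?_
    rw [measureReal_def, Measure.map_apply hX (MeasurableSet.singleton v)]
    ring_nf
  rw [integral_sub (integrable_const 1) hint, hmap]
  simp

/-- **Gini distance correlation under the discrete metric is the normalized Gini impurity
reduction.** For a categorical `X` with values in a finite set `V` endowed with the
discrete metric and a categorical `Y` with `pₖ = P(Y = Lₖ) > 0`, if `GI(X) > 0` then
`ρ = (Δ - ∑ₖ pₖ Δₖ)/Δ = (GI(X) - ∑ₖ pₖ GI(X | Y = Lₖ)) / GI(X)`. -/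
theorem gini_corr_eq_impurity_reduction {Ω V : Type*} [MeasurableSpace Ω]
    [Fintype V] [DecidableEq V] [MeasurableSpace V] [MeasurableSingletonClass V]
    (μ : Measure Ω) [IsProbabilityMeasure μ] (K : ℕ)
    (X : Ω → V) (Y : Ω → Fin K) (hX : Measurable X) (hY : Measurable Y)
    (hp : ∀ k, 0 < (μ (Y ⁻¹' {k})).toReal)
    (Δ : ℝ) (Δk : Fin K → ℝ) (GIX : ℝ) (GIXk : Fin K → ℝ)
    (hΔ : Δ = ∫ ω₁, ∫ ω₂, (if X ω₁ ≠ X ω₂ then (1 : ℝ) else 0) ∂μ ∂μ)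
    (hΔk : ∀ k, Δk k =
      ∫ ω₁, ∫ ω₂, (if X ω₁ ≠ X ω₂ then (1 : ℝ) else 0) ∂(μ[|Y ⁻¹' {k}]) ∂(μ[|Y ⁻¹' {k}]))
    (hGIX : GIX = 1 - ∑ v : V, (μ (X ⁻¹' {v})).toReal ^ 2)
    (hGIXk : ∀ k, GIXk k = 1 - ∑ v : V, ((μ[|Y ⁻¹' {k}]) (X ⁻¹' {v})).toReal ^ 2)
    (hΔpos : 0 < Δ) (hGIpos : 0 < GIX) :
    (Δ - ∑ k : Fin K, (μ (Y ⁻¹' {k})).toReal * Δk k) / Δ =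
      (GIX - ∑ k : Fin K, (μ (Y ⁻¹' {k})).toReal * GIXk k) / GIX := by
  have hΔeq : Δ = GIX := by
    rw [hΔ, hGIX, double_integral_discrete_metric μ X hX]
  have hΔkeq : ∀ k, Δk k = GIXk k := by
    intro k
    have hne : μ (Y ⁻¹' {k}) ≠ 0 := by
      intro h
      simpa [h] using hp k
    have : IsProbabilityMeasure (μ[|Y ⁻¹' {k}]) :=
      cond_isProbabilityMeasure hne
    rw [hΔk, hGIXk, double_integral_discrete_metric _ X hX]
  rw [hΔeq]
  congr 2
  exact Finset.sum_congr rfl fun k _ => by rw [hΔkeq]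
end

section
/- Let ν_1, …, ν_K be Borel probability measures on ℝ^q, each with finite first moment (∫ ‖x‖ dν_k(x) < ∞), let p_1, …, p_K > 0 with Σ_k p_k = 1, and let ν = Σ_k p_k ν_k be the mixture. Then ∫∫ ‖x − y‖ dν(x) dν(y) − Σ_{k=1}^K p_k ∫∫ ‖x − y‖ dν_k(x) dν_k(y) ≥ 0; that is, the Gini distance covariance gCov = Δ − Σ_k p_k Δ_k is nonnegative, and consequently the Gini distance correlation ρ = gCov/Δ lies in [0, 1] whenever Δ = ∫∫ ‖x − y‖ dν dν > 0. -/
open MeasureTheory Finset ENNReal Real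


lemma pt_ineq {a b a' b' : ℝ≥0∞} (ha : a + a' = 1) (hb : b + b' = 1) :
    a * a' + b * b' ≤ a * b' + b * a' := by
  have haf : a ≠ ∞ := fun h => by simp [h, ENNReal.add_eq_top] at ha
  have haf' : a' ≠ ∞ := fun h => by simp [h, ENNReal.add_eq_top] at ha
  have hbf : b ≠ ∞ := fun h => by simp [h, ENNReal.add_eq_top] at hb
  have hbf' : b' ≠ ∞ := fun h => by simp [h, ENNReal.add_eq_top] at hb
  rw [← ENNReal.ofReal_toReal haf, ← ENNReal.ofReal_toReal haf',
    ← ENNReal.ofReal_toReal hbf, ← ENNReal.ofReal_toReal hbf']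
  have hA : 0 ≤ a.toReal := ENNReal.toReal_nonneg
  have hA' : 0 ≤ a'.toReal := ENNReal.toReal_nonneg
  have hB : 0 ≤ b.toReal := ENNReal.toReal_nonneg
  have hB' : 0 ≤ b'.toReal := ENNReal.toReal_nonneg
  have hA1 : a.toReal + a'.toReal = 1 := by
    rw [← ENNReal.toReal_add haf haf', ha]; simp
  have hB1 : b.toReal + b'.toReal = 1 := by
    rw [← ENNReal.toReal_add hbf hbf', hb]; simp
  rw [← ENNReal.ofReal_mul hA, ← ENNReal.ofReal_mul hB, ← ENNReal.ofReal_mul hA,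
    ← ENNReal.ofReal_mul hB, ← ENNReal.ofReal_add (by positivity) (by positivity),
    ← ENNReal.ofReal_add (by positivity) (by positivity)]
  exact ENNReal.ofReal_le_ofReal (by nlinarith [sq_nonneg (a.toReal - b.toReal)])


noncomputable def ge1 (x u : ℝ) : ℝ≥0∞ := if x ≤ u then 1 else 0
noncomputable def gt1 (u x : ℝ) : ℝ≥0∞ := if u < x then 1 else 0

lemma meas_ge1 : Measurable (fun p : ℝ × ℝ => ge1 p.1 p.2) :=
  Measurable.ite (measurableSet_le measurable_fst measurable_snd) measurable_const
    measurable_const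

lemma meas_gt1 : Measurable (fun p : ℝ × ℝ => gt1 p.1 p.2) :=
  Measurable.ite (measurableSet_lt measurable_fst measurable_snd) measurable_const
    measurable_const

lemma meas_gt1_right (u : ℝ) : Measurable (gt1 u) :=
  Measurable.ite measurableSet_Ioi measurable_const measurable_const

lemma meas_ge1_left (u : ℝ) : Measurable (fun x => ge1 x u) :=
  Measurable.ite measurableSet_Iic measurable_const measurable_const

lemma meas_ge1_right (s : ℝ) : Measurable (ge1 s) :=
  Measurable.ite measurableSet_Ici measurable_const measurable_const

lemma meas_gt1_left (t : ℝ) : Measurable (fun u => gt1 u t) :=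
  Measurable.ite measurableSet_Iio measurable_const measurable_const

lemma lint_gt1 (β : Measure ℝ) (u : ℝ) : (∫⁻ t, gt1 u t ∂β) = β (Set.Ioi u) := by
  have h : ∀ t, gt1 u t = (Set.Ioi u).indicator 1 t := by
    intro t
    by_cases h : u < t <;> simp [h, Set.indicator_apply, gt1]
  simp_rw [h]
  exact lintegral_indicator_one measurableSet_Ioi

lemma lint_ge1 (β : Measure ℝ) (u : ℝ) : (∫⁻ t, ge1 t u ∂β) = β (Set.Iic u) := by
  have h : ∀ t, ge1 t u = (Set.Iic u).indicator 1 t := by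
    intro t
    by_cases h : t ≤ u <;> simp [h, Set.indicator_apply, ge1]
  simp_rw [h]
  exact lintegral_indicator_one measurableSet_Iic

lemma meas_Iic (β : Measure ℝ) : Measurable (fun u => β (Set.Iic u)) :=
  Monotone.measurable (fun _ _ hxy => measure_mono (Set.Iic_subset_Iic.2 hxy))

lemma meas_Ioi (β : Measure ℝ) : Measurable (fun u => β (Set.Ioi u)) :=
  Antitone.measurable (fun _ _ hxy => measure_mono (Set.Ioi_subset_Ioi hxy))

lemma abs_eq_lintegral (s t : ℝ) :
    ENNReal.ofReal |s - t| = ∫⁻ u, (ge1 s u * gt1 u t + ge1 t u * gt1 u s) := by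
  have key : ∀ v w : ℝ, (∫⁻ u, ge1 v u * gt1 u w) = ENNReal.ofReal (w - v) := by
    intro v w
    have h : ∀ u : ℝ, ge1 v u * gt1 u w = (Set.Ico v w).indicator 1 u := by
      intro u
      by_cases h1 : v ≤ u <;> by_cases h2 : u < w <;>
        simp [h1, h2, Set.indicator_apply, Set.mem_Ico, ge1, gt1]
    simp_rw [h]
    rw [lintegral_indicator_one measurableSet_Ico, Real.volume_Ico]
  rw [lintegral_add_left (f := fun u => ge1 s u * gt1 u t) ((meas_ge1_right s).mul (meas_gt1_left t))]
  rw [key, key]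
  rcases le_total s t with h | h
  · rw [abs_of_nonpos (by linarith : s - t ≤ 0), ENNReal.ofReal_eq_zero.mpr
      (by linarith : s - t ≤ 0), add_zero, neg_sub]
  · rw [abs_of_nonneg (by linarith : 0 ≤ s - t), ENNReal.ofReal_eq_zero.mpr
      (by linarith : t - s ≤ 0), zero_add]

lemma oneDim_formula (α β : Measure ℝ) [IsProbabilityMeasure α] [IsProbabilityMeasure β] :
    ∫⁻ s, ∫⁻ t, ENNReal.ofReal |s - t| ∂β ∂α
      = ∫⁻ u, (α (Set.Iic u) * β (Set.Ioi u) + α (Set.Ioi u) * β (Set.Iic u)) := by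
  simp_rw [abs_eq_lintegral]
  have step1 : ∀ s : ℝ, (∫⁻ t, ∫⁻ u, (ge1 s u * gt1 u t + ge1 t u * gt1 u s) ∂volume ∂β)
      = ∫⁻ u, (ge1 s u * β (Set.Ioi u) + β (Set.Iic u) * gt1 u s) ∂volume := by
    intro s
    rw [lintegral_lintegral_swap]
    · congr 1 with u
      rw [lintegral_add_left (f := fun x => ge1 s u * gt1 u x) (measurable_const.mul (meas_gt1_right u)),
        lintegral_const_mul _ (meas_gt1_right u), lint_gt1,
        lintegral_mul_const _ (meas_ge1_left u), lint_ge1]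
    · apply AEMeasurable.add
      · exact ((meas_ge1.comp (measurable_const.prodMk measurable_snd)).mul
          (meas_gt1.comp (measurable_snd.prodMk measurable_fst))).aemeasurable
      · exact ((meas_ge1.comp (measurable_fst.prodMk measurable_snd)).mul
          (meas_gt1.comp (measurable_snd.prodMk measurable_const))).aemeasurable
  simp_rw [step1]
  rw [lintegral_lintegral_swap]
  · congr 1 with u
    rw [lintegral_add_left (f := fun x => ge1 x u * β (Set.Ioi u)) ((meas_ge1_left u).mul measurable_const),
      lintegral_mul_const _ (meas_ge1_left u), lint_ge1,
      lintegral_const_mul _ (meas_gt1_right u), lint_gt1]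
    ring
  · apply AEMeasurable.add
    · exact ((meas_ge1.comp (measurable_fst.prodMk measurable_snd)).mul
        ((meas_Ioi β).comp measurable_snd)).aemeasurable
    · exact (((meas_Iic β).comp measurable_snd).mul
        (meas_gt1.comp (measurable_snd.prodMk measurable_fst))).aemeasurable

lemma prob_Iic_add_Ioi (α : Measure ℝ) [IsProbabilityMeasure α] (u : ℝ) :
    α (Set.Iic u) + α (Set.Ioi u) = 1 := by
  rw [← measure_univ (μ := α), ← Set.Iic_union_Ioi (a := u)]
  exact (measure_union (Set.Iic_disjoint_Ioi le_rfl) measurableSet_Ioi).symm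

lemma oneDim_key (α β : Measure ℝ) [IsProbabilityMeasure α] [IsProbabilityMeasure β] :
    (∫⁻ s, ∫⁻ t, ENNReal.ofReal |s - t| ∂α ∂α)
      + (∫⁻ s, ∫⁻ t, ENNReal.ofReal |s - t| ∂β ∂β)
      ≤ 2 * ∫⁻ s, ∫⁻ t, ENNReal.ofReal |s - t| ∂β ∂α := by
  rw [oneDim_formula, oneDim_formula, oneDim_formula, ← lintegral_add_left, ← lintegral_const_mul]
  · apply lintegral_mono
    intro u
    have h := pt_ineq (prob_Iic_add_Ioi α u) (prob_Iic_add_Ioi β u)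
    calc α (Set.Iic u) * α (Set.Ioi u) + α (Set.Ioi u) * α (Set.Iic u)
          + (β (Set.Iic u) * β (Set.Ioi u) + β (Set.Ioi u) * β (Set.Iic u))
        = 2 * (α (Set.Iic u) * α (Set.Ioi u) + β (Set.Iic u) * β (Set.Ioi u)) := by ring
      _ ≤ 2 * (α (Set.Iic u) * β (Set.Ioi u) + β (Set.Iic u) * α (Set.Ioi u)) := by
          gcongr
      _ = 2 * (α (Set.Iic u) * β (Set.Ioi u) + α (Set.Ioi u) * β (Set.Iic u)) := by ring
  · exact ((meas_Iic α).mul (meas_Ioi β)).add ((meas_Ioi α).mul (meas_Iic β))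
  · exact ((meas_Iic α).mul (meas_Ioi α)).add ((meas_Ioi α).mul (meas_Iic α))

noncomputable def gaussE (q : ℕ) : Measure (EuclideanSpace ℝ (Fin q)) :=
  volume.withDensity (fun x => ENNReal.ofReal (Real.exp (-‖x‖^2)))

section Gauss
variable {q : ℕ}
local notation "E" => EuclideanSpace ℝ (Fin q)

lemma meas_dens : Measurable (fun x : E => ENNReal.ofReal (Real.exp (-‖x‖^2))) :=
  (measurable_norm.pow measurable_const).neg.exp.ennreal_ofReal

instance : SFinite (gaussE q) := by unfold gaussE; infer_instance

-- rotation invariance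
lemma gaussE_rot (T : EuclideanSpace ℝ (Fin q) ≃ₗᵢ[ℝ] EuclideanSpace ℝ (Fin q))
    {F : EuclideanSpace ℝ (Fin q) → ℝ≥0∞} (hF : Measurable F) :
    ∫⁻ g, F g ∂(gaussE q) = ∫⁻ g, F (T g) ∂(gaussE q) := by
  unfold gaussE
  have hc : (fun g : E => F (T g)) = F ∘ ⇑T := rfl
  rw [lintegral_withDensity_eq_lintegral_mul _ meas_dens hF, hc,
    lintegral_withDensity_eq_lintegral_mul _ meas_dens (hF.comp T.continuous.measurable)]
  simp only [Pi.mul_apply, Function.comp_apply]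
  rw [← (T.measurePreserving).lintegral_comp (f := fun x =>
    ENNReal.ofReal (Real.exp (-‖x‖^2)) * F x) (meas_dens.mul hF)]
  simp_rw [T.norm_map]

lemma gaussE_halfexp_integrable :
    Integrable (fun x : E => Real.exp (-(1/2) * ‖x‖^2)) := by
  have h := GaussianFourier.integrable_cexp_neg_mul_sq_norm_add (V := E)
    (b := (1/2 : ℂ)) (by norm_num) 0 0
  have h2 := h.norm
  apply h2.congr
  filter_upwards with x
  rw [Complex.norm_exp]
  congr 1
  rw [Complex.add_re, Complex.mul_re]
  simp [← Complex.ofReal_pow]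

end Gauss

lemma meas_inner_abs {q : ℕ} (v : EuclideanSpace ℝ (Fin q)) :
    Measurable (fun g : EuclideanSpace ℝ (Fin q) =>
      ENNReal.ofReal |(inner ℝ g v : ℝ)|) :=
  ((Continuous.inner continuous_id continuous_const).abs.measurable).ennreal_ofReal

lemma gauss_rep (q : ℕ) : ∃ C : ℝ≥0∞, 0 < C ∧ C < ∞ ∧
    ∀ v : EuclideanSpace ℝ (Fin q),
      (∫⁻ g, ENNReal.ofReal |(inner ℝ g v : ℝ)| ∂(gaussE q)) = C * ENNReal.ofReal ‖v‖ := by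
  by_cases hq : q = 0
  · refine ⟨1, zero_lt_one, one_lt_top, fun v => ?_⟩
    subst hq
    have hv : v = 0 := by ext i; exact Fin.elim0 i
    subst hv
    simp
  · have h0 : 0 < q := Nat.pos_of_ne_zero hq
    set v₀ : EuclideanSpace ℝ (Fin q) := EuclideanSpace.single ⟨0, h0⟩ (1:ℝ) with hv₀def
    have hv₀ : ‖v₀‖ = 1 := by rw [hv₀def, EuclideanSpace.norm_single]; norm_num
    set C : ℝ≥0∞ := ∫⁻ g, ENNReal.ofReal |(inner ℝ g v₀ : ℝ)| ∂(gaussE q) with hCdef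
    have hCrep : C = ∫⁻ g, ENNReal.ofReal (Real.exp (-‖g‖^2))
        * ENNReal.ofReal |(inner ℝ g v₀ : ℝ)| ∂(volume) := by
      rw [hCdef]
      unfold gaussE
      rw [lintegral_withDensity_eq_lintegral_mul _ meas_dens (meas_inner_abs v₀)]
      rfl
    -- C is finite
    have hCfin : C < ∞ := by
      rw [hCrep]
      calc ∫⁻ g, ENNReal.ofReal (Real.exp (-‖g‖^2))
            * ENNReal.ofReal |(inner ℝ g v₀ : ℝ)| ∂(volume)
          ≤ ∫⁻ g : EuclideanSpace ℝ (Fin q),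
            ENNReal.ofReal (Real.exp (-(1/2) * ‖g‖^2)) ∂(volume) := by
            apply lintegral_mono
            intro g
            dsimp only
            rw [← ENNReal.ofReal_mul (Real.exp_nonneg _)]
            apply ENNReal.ofReal_le_ofReal
            have h1 : |(inner ℝ g v₀ : ℝ)| ≤ ‖g‖ := by
              have := abs_real_inner_le_norm g v₀
              rwa [hv₀, mul_one] at this
            have h2 : ‖g‖ ≤ Real.exp ((1/2) * ‖g‖^2) := by
              have := Real.add_one_le_exp ((1/2) * ‖g‖^2)
              nlinarith [sq_nonneg (‖g‖ - 1)]
            calc Real.exp (-‖g‖^2) * |(inner ℝ g v₀ : ℝ)|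
                ≤ Real.exp (-‖g‖^2) * Real.exp ((1/2) * ‖g‖^2) := by
                  apply mul_le_mul_of_nonneg_left (h1.trans h2) (Real.exp_nonneg _)
              _ = Real.exp (-(1/2) * ‖g‖^2) := by rw [← Real.exp_add]; ring_nf
        _ < ∞ := by
            have h := gaussE_halfexp_integrable (q := q)
            rw [← hasFiniteIntegral_iff_ofReal]
            · exact h.2
            · filter_upwards with x using Real.exp_nonneg _
    -- C is positive
    have hCpos : 0 < C := by
      rcases eq_zero_or_pos C with h0' | h
      · exfalso
        rw [hCrep, lintegral_eq_zero_iff (f := fun g => ENNReal.ofReal (Real.exp (-‖g‖^2))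
          * ENNReal.ofReal |(inner ℝ g v₀ : ℝ)|) (meas_dens.mul (meas_inner_abs v₀))] at h0'
        have hsub : {g : EuclideanSpace ℝ (Fin q) | (inner ℝ g v₀ : ℝ) ≠ 0}
            ⊆ {g | ¬ (ENNReal.ofReal (Real.exp (-‖g‖^2))
              * ENNReal.ofReal |(inner ℝ g v₀ : ℝ)| = 0)} := by
          intro g hg
          simp only [Set.mem_setOf_eq, mul_eq_zero, not_or] at hg ⊢
          constructor
          · simp [ENNReal.ofReal_eq_zero, not_le, Real.exp_pos]
          · simp only [ENNReal.ofReal_eq_zero, not_le]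
            exact abs_pos.mpr hg
        have hzero : volume {g : EuclideanSpace ℝ (Fin q) | (inner ℝ g v₀ : ℝ) ≠ 0} = 0 :=
          measure_mono_null hsub h0'
        set K : Submodule ℝ (EuclideanSpace ℝ (Fin q)) := (ℝ ∙ v₀)ᗮ with hKdef
        have hKtop : K ≠ ⊤ := by
          intro htop
          have : v₀ ∈ K := htop ▸ Submodule.mem_top
          rw [hKdef, Submodule.mem_orthogonal_singleton_iff_inner_right] at this
          rw [real_inner_self_eq_norm_sq, hv₀] at this
          norm_num at this
        have hKzero : volume (K : Set (EuclideanSpace ℝ (Fin q))) = 0 :=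
          Measure.addHaar_submodule volume K hKtop
        have huniv : (Set.univ : Set (EuclideanSpace ℝ (Fin q)))
            ⊆ {g | (inner ℝ g v₀ : ℝ) ≠ 0} ∪ (K : Set (EuclideanSpace ℝ (Fin q))) := by
          intro g _
          by_cases hg : (inner ℝ g v₀ : ℝ) = 0
          · right
            rw [hKdef]
            rw [SetLike.mem_coe, Submodule.mem_orthogonal_singleton_iff_inner_right]
            rwa [real_inner_comm]
          · left; exact hg
        have : volume (Set.univ : Set (EuclideanSpace ℝ (Fin q))) = 0 := by
          refine measure_mono_null huniv ?_
          exact measure_union_null hzero hKzero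
        have hne : volume (Set.univ : Set (EuclideanSpace ℝ (Fin q))) ≠ 0 :=
          (isOpen_univ.measure_ne_zero volume ⟨0, trivial⟩)
        exact hne this
      · exact h
    refine ⟨C, hCpos, hCfin, fun v => ?_⟩
    by_cases hv : v = 0
    · subst hv; simp
    · set w : EuclideanSpace ℝ (Fin q) := ‖v‖⁻¹ • v with hwdef
      have hw : ‖w‖ = 1 := by
        rw [hwdef, norm_smul, norm_inv, norm_norm]
        field_simp [norm_ne_zero_iff.mpr hv]
      set T := Submodule.reflection (ℝ ∙ (v₀ - w))ᗮ with hTdef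
      have hT : T v₀ = w := Submodule.reflection_sub (by rw [hv₀, hw])
      have hvw : v = T (‖v‖ • v₀) := by
        rw [T.map_smul, hT, hwdef, smul_smul]
        field_simp [norm_ne_zero_iff.mpr hv]
        rw [one_smul]
      rw [gaussE_rot T (meas_inner_abs v)]
      have hinner : ∀ g, (inner ℝ (T g) v : ℝ) = ‖v‖ * (inner ℝ g v₀ : ℝ) := by
        intro g
        conv_lhs => rw [hvw]
        rw [LinearIsometryEquiv.inner_map_map, real_inner_smul_right]
      simp_rw [hinner, abs_mul, abs_norm, ENNReal.ofReal_mul (norm_nonneg v)]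
      rw [lintegral_const_mul _ (meas_inner_abs v₀), ← hCdef, mul_comm]

instance {q : ℕ} : SFinite (gaussE q) := by unfold gaussE; infer_instance


section Multi
variable {q : ℕ}

lemma cont_inner3 : Continuous (fun r : (EuclideanSpace ℝ (Fin q) × EuclideanSpace ℝ (Fin q))
    × EuclideanSpace ℝ (Fin q) =>
    ENNReal.ofReal |(inner ℝ r.1.1 r.1.2 : ℝ) - (inner ℝ r.1.1 r.2 : ℝ)|) := by
  refine ENNReal.continuous_ofReal.comp (Continuous.abs (Continuous.sub ?_ ?_))
  · exact continuous_inner.comp continuous_fst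
  · exact continuous_inner.comp ((continuous_fst.comp continuous_fst).prodMk continuous_snd)

-- J g = double lintegral of the projected distances
noncomputable def Jfun (α β : Measure (EuclideanSpace ℝ (Fin q)))
    (g : EuclideanSpace ℝ (Fin q)) : ℝ≥0∞ :=
  ∫⁻ x, ∫⁻ y, ENNReal.ofReal |(inner ℝ g x : ℝ) - (inner ℝ g y : ℝ)| ∂β ∂α

set_option maxHeartbeats 1000000 in
lemma meas_Jfun (α β : Measure (EuclideanSpace ℝ (Fin q))) [SFinite α] [SFinite β] :
    Measurable (Jfun α β) := by
  have h1 : Measurable (fun p : EuclideanSpace ℝ (Fin q) × EuclideanSpace ℝ (Fin q) =>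
      ∫⁻ y, ENNReal.ofReal |(inner ℝ p.1 p.2 : ℝ) - (inner ℝ p.1 y : ℝ)| ∂β) :=
    Measurable.lintegral_prod_right' (f := fun r : (EuclideanSpace ℝ (Fin q) × EuclideanSpace ℝ (Fin q)) × EuclideanSpace ℝ (Fin q) =>
      ENNReal.ofReal |(inner ℝ r.1.1 r.1.2 : ℝ) - (inner ℝ r.1.1 r.2 : ℝ)|)
      cont_inner3.measurable
  unfold Jfun
  exact Measurable.lintegral_prod_right' (f := fun p : EuclideanSpace ℝ (Fin q) × EuclideanSpace ℝ (Fin q) =>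
    ∫⁻ y, ENNReal.ofReal |(inner ℝ p.1 p.2 : ℝ) - (inner ℝ p.1 y : ℝ)| ∂β) h1
end Multi

section Multi
variable {q : ℕ}
local notation "E" => EuclideanSpace ℝ (Fin q)

lemma meas_inner_right (g : EuclideanSpace ℝ (Fin q)) :
    Measurable (fun x : EuclideanSpace ℝ (Fin q) => (inner ℝ g x : ℝ)) :=
  (Continuous.inner continuous_const continuous_id).measurable

lemma cont_inner3' : Measurable (fun r : (EuclideanSpace ℝ (Fin q) × EuclideanSpace ℝ (Fin q))
    × EuclideanSpace ℝ (Fin q) =>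
    ENNReal.ofReal |(inner ℝ r.1.2 r.1.1 : ℝ) - (inner ℝ r.1.2 r.2 : ℝ)|) := by
  refine Measurable.ennreal_ofReal (Continuous.measurable (Continuous.abs (Continuous.sub ?_ ?_)))
  · exact Continuous.inner (continuous_snd.comp continuous_fst) (continuous_fst.comp continuous_fst)
  · exact Continuous.inner (continuous_snd.comp continuous_fst) continuous_snd

lemma meas_abs_sub_enn : Measurable (fun p : ℝ × ℝ => ENNReal.ofReal |p.1 - p.2|) :=
  ((continuous_fst.sub continuous_snd).abs.measurable).ennreal_ofReal

lemma claimC {C : ℝ≥0∞} (hCfin : C ≠ ∞)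
    (hrep : ∀ v : E, (∫⁻ g, ENNReal.ofReal |(inner ℝ g v : ℝ)| ∂(gaussE q))
      = C * ENNReal.ofReal ‖v‖)
    (α β : Measure (EuclideanSpace ℝ (Fin q)))
    [IsProbabilityMeasure α] [IsProbabilityMeasure β] :
    C * (∫⁻ x, ∫⁻ y, ENNReal.ofReal ‖x - y‖ ∂β ∂α) = ∫⁻ g, Jfun α β g ∂(gaussE q) := by
  rw [← lintegral_const_mul' C _ hCfin]
  have step1 : ∀ x : E, C * (∫⁻ y, ENNReal.ofReal ‖x - y‖ ∂β)
      = ∫⁻ g, ∫⁻ y, ENNReal.ofReal |(inner ℝ g x : ℝ) - (inner ℝ g y : ℝ)| ∂β ∂(gaussE q) := by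
    intro x
    rw [← lintegral_const_mul' C _ hCfin]
    have h1 : ∀ y : E, C * ENNReal.ofReal ‖x - y‖
        = ∫⁻ g, ENNReal.ofReal |(inner ℝ g x : ℝ) - (inner ℝ g y : ℝ)| ∂(gaussE q) := by
      intro y
      rw [← hrep (x - y)]
      congr 1 with g
      rw [inner_sub_right]
    simp_rw [h1]
    rw [lintegral_lintegral_swap]
    exact (((Continuous.inner (continuous_snd) (continuous_const)).sub
      ((Continuous.inner continuous_snd continuous_fst))).abs.measurable).ennreal_ofReal.aemeasurable
  simp_rw [step1]
  rw [lintegral_lintegral_swap]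
  · rfl
  · have hinner : Measurable (fun p : E × E =>
        ∫⁻ y, ENNReal.ofReal |(inner ℝ p.2 p.1 : ℝ) - (inner ℝ p.2 y : ℝ)| ∂β) := by
      exact Measurable.lintegral_prod_right'
        (f := fun r : (E × E) × E =>
          ENNReal.ofReal |(inner ℝ r.1.2 r.1.1 : ℝ) - (inner ℝ r.1.2 r.2 : ℝ)|) cont_inner3'
    exact hinner.aemeasurable

lemma multiDim_key (μ ν : Measure (EuclideanSpace ℝ (Fin q)))
    [IsProbabilityMeasure μ] [IsProbabilityMeasure ν] :
    (∫⁻ x, ∫⁻ y, ENNReal.ofReal ‖x - y‖ ∂μ ∂μ)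
      + (∫⁻ x, ∫⁻ y, ENNReal.ofReal ‖x - y‖ ∂ν ∂ν)
      ≤ 2 * ∫⁻ x, ∫⁻ y, ENNReal.ofReal ‖x - y‖ ∂ν ∂μ := by
  obtain ⟨C, hC0, hCfin, hrep⟩ := gauss_rep q
  rw [← ENNReal.mul_le_mul_iff_right hC0.ne' hCfin.ne]
  have key : ∀ g : E, Jfun μ μ g + Jfun ν ν g ≤ 2 * Jfun μ ν g := by
    intro g
    have hf : Measurable (fun x : E => (inner ℝ g x : ℝ)) := meas_inner_right g
    have hmap : ∀ (α β : Measure (EuclideanSpace ℝ (Fin q))) [IsProbabilityMeasure α]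
        [IsProbabilityMeasure β], Jfun α β g = ∫⁻ s, ∫⁻ t, ENNReal.ofReal |s - t|
          ∂(β.map (fun x : E => (inner ℝ g x : ℝ))) ∂(α.map (fun x : E => (inner ℝ g x : ℝ))) := by
      intro α β _ _
      rw [lintegral_map _ hf]
      · unfold Jfun
        congr 1 with x
        rw [lintegral_map _ hf]
        exact (measurable_const.sub measurable_id).abs.ennreal_ofReal
      · exact Measurable.lintegral_prod_right' (f := fun p : ℝ × ℝ =>
          ENNReal.ofReal |p.1 - p.2|) meas_abs_sub_enn
    haveI : IsProbabilityMeasure (μ.map (fun x : E => (inner ℝ g x : ℝ))) :=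
      Measure.isProbabilityMeasure_map hf.aemeasurable
    haveI : IsProbabilityMeasure (ν.map (fun x : E => (inner ℝ g x : ℝ))) :=
      Measure.isProbabilityMeasure_map hf.aemeasurable
    rw [hmap μ μ, hmap ν ν, hmap μ ν]
    exact oneDim_key _ _
  calc C * ((∫⁻ x, ∫⁻ y, ENNReal.ofReal ‖x - y‖ ∂μ ∂μ)
        + (∫⁻ x, ∫⁻ y, ENNReal.ofReal ‖x - y‖ ∂ν ∂ν))
      = C * (∫⁻ x, ∫⁻ y, ENNReal.ofReal ‖x - y‖ ∂μ ∂μ)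
        + C * (∫⁻ x, ∫⁻ y, ENNReal.ofReal ‖x - y‖ ∂ν ∂ν) := by rw [mul_add]
    _ = (∫⁻ g, Jfun μ μ g ∂(gaussE q)) + (∫⁻ g, Jfun ν ν g ∂(gaussE q)) := by
        rw [claimC hCfin.ne hrep μ μ, claimC hCfin.ne hrep ν ν]
    _ = ∫⁻ g, (Jfun μ μ g + Jfun ν ν g) ∂(gaussE q) := by
        rw [lintegral_add_left (meas_Jfun μ μ)]
    _ ≤ ∫⁻ g, 2 * Jfun μ ν g ∂(gaussE q) := lintegral_mono key
    _ = 2 * ∫⁻ g, Jfun μ ν g ∂(gaussE q) := by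
        rw [lintegral_const_mul 2 (meas_Jfun μ ν)]
    _ = 2 * (C * (∫⁻ x, ∫⁻ y, ENNReal.ofReal ‖x - y‖ ∂ν ∂μ)) := by
        rw [claimC hCfin.ne hrep μ ν]
    _ = C * (2 * ∫⁻ x, ∫⁻ y, ENNReal.ofReal ‖x - y‖ ∂ν ∂μ) := by ring

end Multi


noncomputable def LL {q : ℕ} (α β : Measure (EuclideanSpace ℝ (Fin q))) : ℝ≥0∞ :=
  ∫⁻ x, ∫⁻ y, ENNReal.ofReal ‖x - y‖ ∂β ∂α

section Real
variable {q : ℕ}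
local notation "E" => EuclideanSpace ℝ (Fin q)

lemma meas_norm_sub : Measurable (fun p : EuclideanSpace ℝ (Fin q) × EuclideanSpace ℝ (Fin q) =>
    ENNReal.ofReal ‖p.1 - p.2‖) :=
  (continuous_fst.sub continuous_snd).norm.measurable.ennreal_ofReal

lemma meas_inner_LL (β : Measure (EuclideanSpace ℝ (Fin q))) [SFinite β] :
    Measurable (fun x : EuclideanSpace ℝ (Fin q) => ∫⁻ y, ENNReal.ofReal ‖x - y‖ ∂β) :=
  Measurable.lintegral_prod_right' (f := fun p : EuclideanSpace ℝ (Fin q)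
    × EuclideanSpace ℝ (Fin q) => ENNReal.ofReal ‖p.1 - p.2‖) meas_norm_sub

lemma LL_symm (α β : Measure (EuclideanSpace ℝ (Fin q))) [SFinite α] [SFinite β] :
    LL α β = LL β α := by
  unfold LL
  rw [lintegral_lintegral_swap meas_norm_sub.aemeasurable]
  simp_rw [norm_sub_rev]

lemma inner_LL_le (β : Measure (EuclideanSpace ℝ (Fin q))) [IsProbabilityMeasure β]
    (x : EuclideanSpace ℝ (Fin q)) :
    (∫⁻ y, ENNReal.ofReal ‖x - y‖ ∂β)
      ≤ ENNReal.ofReal ‖x‖ + ∫⁻ y, ENNReal.ofReal ‖y‖ ∂β := by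
  calc (∫⁻ y, ENNReal.ofReal ‖x - y‖ ∂β)
      ≤ ∫⁻ y, (ENNReal.ofReal ‖x‖ + ENNReal.ofReal ‖y‖) ∂β := by
        apply lintegral_mono
        intro y
        dsimp only
        rw [← ENNReal.ofReal_add (norm_nonneg _) (norm_nonneg _)]
        exact ENNReal.ofReal_le_ofReal (norm_sub_le _ _)
    _ = ENNReal.ofReal ‖x‖ + ∫⁻ y, ENNReal.ofReal ‖y‖ ∂β := by
        rw [lintegral_add_left measurable_const, lintegral_const, measure_univ, mul_one]

lemma LL_lt_top (α β : Measure (EuclideanSpace ℝ (Fin q)))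
    [IsProbabilityMeasure α] [IsProbabilityMeasure β]
    (hα : (∫⁻ x, ENNReal.ofReal ‖x‖ ∂α) ≠ ∞) (hβ : (∫⁻ y, ENNReal.ofReal ‖y‖ ∂β) ≠ ∞) :
    LL α β ≠ ∞ := by
  have h : LL α β ≤ (∫⁻ x, ENNReal.ofReal ‖x‖ ∂α) + ∫⁻ y, ENNReal.ofReal ‖y‖ ∂β := by
    unfold LL
    calc (∫⁻ x, ∫⁻ y, ENNReal.ofReal ‖x - y‖ ∂β ∂α)
        ≤ ∫⁻ x, (ENNReal.ofReal ‖x‖ + ∫⁻ y, ENNReal.ofReal ‖y‖ ∂β) ∂α :=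
          lintegral_mono (inner_LL_le β)
      _ = (∫⁻ x, ENNReal.ofReal ‖x‖ ∂α) + ∫⁻ y, ENNReal.ofReal ‖y‖ ∂β := by
          rw [lintegral_add_right _ measurable_const, lintegral_const, measure_univ, mul_one]
  exact fun htop => (htop ▸ h).not_gt (lt_top_iff_ne_top.mpr
    (ENNReal.add_ne_top.mpr ⟨hα, hβ⟩)) |>.elim
  
lemma double_integral_eq (α β : Measure (EuclideanSpace ℝ (Fin q)))
    [IsProbabilityMeasure α] [IsProbabilityMeasure β]
    (hβ : (∫⁻ y, ENNReal.ofReal ‖y‖ ∂β) ≠ ∞) :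
    ∫ x, ∫ y, ‖x - y‖ ∂β ∂α = (LL α β).toReal := by
  have hfin : ∀ x : E, (∫⁻ y, ENNReal.ofReal ‖x - y‖ ∂β) ≠ ∞ := by
    intro x
    exact fun htop => (htop ▸ inner_LL_le β x).not_gt (lt_top_iff_ne_top.mpr
      (ENNReal.add_ne_top.mpr ⟨ENNReal.ofReal_ne_top, hβ⟩)) |>.elim
  have hinner : ∀ x : E, ∫ y, ‖x - y‖ ∂β = (∫⁻ y, ENNReal.ofReal ‖x - y‖ ∂β).toReal := by
    intro x
    rw [integral_eq_lintegral_of_nonneg_ae (f := fun y => ‖x - y‖) (Filter.Eventually.of_forall fun y => norm_nonneg _)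
      (continuous_const.sub continuous_id').norm.aestronglyMeasurable]
  simp_rw [hinner]
  rw [integral_eq_lintegral_of_nonneg_ae
    (Filter.Eventually.of_forall fun x => ENNReal.toReal_nonneg)
    (meas_inner_LL β).ennreal_toReal.aestronglyMeasurable]
  unfold LL
  congr 1
  apply lintegral_congr
  intro x
  rw [ENNReal.ofReal_toReal (hfin x)]

lemma LL_mixture {K : ℕ} (ν : Fin K → Measure (EuclideanSpace ℝ (Fin q)))
    [∀ k, IsProbabilityMeasure (ν k)] (c : Fin K → ℝ≥0∞) (hc : ∀ k, c k ≠ ∞) :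
    LL (∑ k : Fin K, c k • ν k) (∑ k : Fin K, c k • ν k)
      = ∑ j : Fin K, ∑ k : Fin K, c j * c k * LL (ν j) (ν k) := by
  unfold LL
  have hin : ∀ x : E, (∫⁻ y, ENNReal.ofReal ‖x - y‖ ∂(∑ k : Fin K, c k • ν k))
      = ∑ k : Fin K, c k * ∫⁻ y, ENNReal.ofReal ‖x - y‖ ∂(ν k) := by
    intro x
    rw [lintegral_finset_sum_measure]
    simp_rw [lintegral_smul_measure, smul_eq_mul]
  simp_rw [hin]
  rw [lintegral_finset_sum_measure]
  apply Finset.sum_congr rfl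
  intro j _
  rw [lintegral_smul_measure, lintegral_finset_sum (s := Finset.univ)
    (fun k _ => ((meas_inner_LL (ν k)).const_mul (c k)))]
  rw [smul_eq_mul, Finset.mul_sum]
  apply Finset.sum_congr rfl
  intro k _
  rw [lintegral_const_mul' _ _ (hc k), mul_assoc]

lemma moment_ne_top (β : Measure (EuclideanSpace ℝ (Fin q)))
    (h : Integrable (fun x : EuclideanSpace ℝ (Fin q) => ‖x‖) β) :
    (∫⁻ y, ENNReal.ofReal ‖y‖ ∂β) ≠ ∞ := by
  have := (hasFiniteIntegral_iff_ofReal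
    (Filter.Eventually.of_forall fun y => norm_nonneg _)).mp h.hasFiniteIntegral
  exact this.ne

end Real

/-- **Nonnegativity of the Gini distance covariance and range of the Gini distance
correlation.** For Borel probability measures `ν₁, …, ν_K` on `ℝ^q` with finite first
moments, weights `pₖ > 0` summing to `1`, mixture `ν = ∑ₖ pₖ νₖ`,
`Δ = ∫∫ ‖x - y‖ dν dν` and `Δₖ = ∫∫ ‖x - y‖ dνₖ dνₖ`, one has
`gCov = Δ - ∑ₖ pₖ Δₖ ≥ 0`, and `ρ = gCov/Δ ∈ [0,1]` whenever `Δ > 0`. -/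
theorem gcov_nonneg_corr_range (q K : ℕ)
    (ν : Fin K → Measure (EuclideanSpace ℝ (Fin q))) [∀ k, IsProbabilityMeasure (ν k)]
    (hmom : ∀ k, Integrable (fun x : EuclideanSpace ℝ (Fin q) => ‖x‖) (ν k))
    (p : Fin K → ℝ) (hp : ∀ k, 0 < p k) (hsum : ∑ k : Fin K, p k = 1)
    (Δ : ℝ) (Δk : Fin K → ℝ)
    (hΔ : Δ = ∫ x, ∫ y, ‖x - y‖
      ∂(∑ k : Fin K, ENNReal.ofReal (p k) • ν k)
      ∂(∑ k : Fin K, ENNReal.ofReal (p k) • ν k))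
    (hΔk : ∀ k, Δk k = ∫ x, ∫ y, ‖x - y‖ ∂(ν k) ∂(ν k)) :
    0 ≤ Δ - ∑ k : Fin K, p k * Δk k ∧
      (0 < Δ → (Δ - ∑ k : Fin K, p k * Δk k) / Δ ∈ Set.Icc (0 : ℝ) 1) := by
  set c : Fin K → ℝ≥0∞ := fun k => ENNReal.ofReal (p k) with hcdef
  have hc : ∀ k, c k ≠ ∞ := fun k => ENNReal.ofReal_ne_top
  set μmix : Measure (EuclideanSpace ℝ (Fin q)) := ∑ k : Fin K, c k • ν k with hmixdef
  haveI hprob : IsProbabilityMeasure μmix := by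
    constructor
    rw [hmixdef]
    rw [Measure.finset_sum_apply]
    simp_rw [Measure.smul_apply, measure_univ, smul_eq_mul, mul_one]
    rw [hcdef, ← ENNReal.ofReal_sum_of_nonneg (fun k _ => (hp k).le), hsum,
      ENNReal.ofReal_one]
  -- finite first moments in lintegral form
  have hM : ∀ k, (∫⁻ y, ENNReal.ofReal ‖y‖ ∂(ν k)) ≠ ∞ := fun k => moment_ne_top _ (hmom k)
  have hMmix : (∫⁻ y, ENNReal.ofReal ‖y‖ ∂μmix) ≠ ∞ := by
    rw [hmixdef, lintegral_finset_sum_measure]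
    simp_rw [lintegral_smul_measure]
    refine (ENNReal.sum_lt_top.mpr fun k _ => ?_).ne
    exact ENNReal.mul_lt_top (ENNReal.ofReal_lt_top) (hM k).lt_top
  -- finiteness of all pair energies
  have hLfin : ∀ j k, LL (ν j) (ν k) ≠ ∞ := fun j k => LL_lt_top _ _ (hM j) (hM k)
  set D : Fin K → Fin K → ℝ := fun j k => (LL (ν j) (ν k)).toReal with hDdef
  have hDnonneg : ∀ j k, 0 ≤ D j k := fun j k => ENNReal.toReal_nonneg
  -- identification of Δ
  have hΔeq : Δ = ∑ j : Fin K, ∑ k : Fin K, p j * p k * D j k := by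
    rw [hΔ, double_integral_eq μmix μmix hMmix, hmixdef, LL_mixture ν c hc,
      ENNReal.toReal_sum (fun j _ => ?_)]
    · apply Finset.sum_congr rfl
      intro j _
      rw [ENNReal.toReal_sum (fun k _ => ?_)]
      · apply Finset.sum_congr rfl
        intro k _
        rw [ENNReal.toReal_mul, ENNReal.toReal_mul, hcdef,
          ENNReal.toReal_ofReal (hp j).le, ENNReal.toReal_ofReal (hp k).le]
      · exact ENNReal.mul_ne_top (ENNReal.mul_ne_top (hc j) (hc k)) (hLfin j k)
    · refine (ENNReal.sum_lt_top.mpr fun k _ => ?_).ne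
      exact (ENNReal.mul_ne_top (ENNReal.mul_ne_top (hc j) (hc k)) (hLfin j k)).lt_top
  have hΔkeq : ∀ k, Δk k = D k k := by
    intro k
    rw [hΔk k, double_integral_eq (ν k) (ν k) (hM k)]
  -- pairwise energy-distance nonnegativity
  have hkey : ∀ j k, D j j + D k k ≤ 2 * D j k := by
    intro j k
    have h := multiDim_key (ν j) (ν k)
    have h2 : ((LL (ν j) (ν j)) + (LL (ν k) (ν k))).toReal ≤ ((2 : ℝ≥0∞) * LL (ν j) (ν k)).toReal := by
      apply ENNReal.toReal_mono
      · exact ENNReal.mul_ne_top (by norm_num) (hLfin j k)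
      · exact h
    rwa [ENNReal.toReal_add (hLfin j j) (hLfin k k), ENNReal.toReal_mul,
      ENNReal.toReal_ofNat] at h2
  -- symmetry is not needed; algebra
  set P : ℝ := ∑ k : Fin K, p k * Δk k with hPdef
  have hBsum : ∑ j : Fin K, ∑ k : Fin K, p j * p k * D j j = ∑ j : Fin K, p j * D j j := by
    apply Finset.sum_congr rfl
    intro j _
    calc ∑ k : Fin K, p j * p k * D j j = (∑ k : Fin K, p k) * (p j * D j j) := by
          rw [Finset.sum_mul]
          exact Finset.sum_congr rfl (fun k _ => by ring)
      _ = p j * D j j := by rw [hsum, one_mul]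
  have hCsum : ∑ j : Fin K, ∑ k : Fin K, p j * p k * D k k = ∑ k : Fin K, p k * D k k := by
    rw [Finset.sum_comm]
    apply Finset.sum_congr rfl
    intro k _
    calc ∑ j : Fin K, p j * p k * D k k = (∑ j : Fin K, p j) * (p k * D k k) := by
          rw [Finset.sum_mul]
          exact Finset.sum_congr rfl (fun j _ => by ring)
      _ = p k * D k k := by rw [hsum, one_mul]
  have hS : 0 ≤ ∑ j : Fin K, ∑ k : Fin K, p j * p k * (2 * D j k - D j j - D k k) := by
    apply Finset.sum_nonneg
    intro j _
    apply Finset.sum_nonneg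
    intro k _
    apply mul_nonneg (mul_nonneg (hp j).le (hp k).le)
    have := hkey j k
    linarith
  have hexp : ∑ j : Fin K, ∑ k : Fin K, p j * p k * (2 * D j k - D j j - D k k)
      = 2 * Δ - 2 * P := by
    have h1 : ∀ j k : Fin K, p j * p k * (2 * D j k - D j j - D k k)
        = 2 * (p j * p k * D j k) - p j * p k * D j j - p j * p k * D k k :=
      fun j k => by ring
    simp_rw [h1, Finset.sum_sub_distrib, ← Finset.mul_sum]
    rw [hBsum, hCsum, hΔeq, hPdef]
    have : ∀ k, p k * Δk k = p k * D k k := fun k => by rw [hΔkeq k]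
    simp_rw [this]
    ring
  have hPnonneg : 0 ≤ P := by
    apply Finset.sum_nonneg
    intro k _
    rw [hΔkeq k]
    exact mul_nonneg (hp k).le (hDnonneg k k)
  have hmain : 0 ≤ Δ - P := by linarith
  refine ⟨hmain, fun hΔpos => ⟨div_nonneg hmain hΔpos.le, ?_⟩⟩
  rw [div_le_one hΔpos]
  linarith
end
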